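/- arXiv:1305.0636 — 4 statements merged into one kernel-verified Lean document; each statement's English description precedes it below -/
import Mathlib

section
/- For every finite graph G, lcw(G) − 1 ≤ lcw(complement of G) ≤ lcw(G) + 1, where lcw denotes linear clique-width. -/
/-! ## Common definitions

Linear clique-width (lcw) expressions and derived notions, following
Brignall–Lozin–Stacho, "Bichain graphs: geometric model and universal graphs" /
"Linear clique-width of subclasses of cographs".

An lcw expression over a label alphabet `L` is a list of operations:
insert a new vertex with a given label, add all edges between two distinct
label classes, or relabel one label class to another.  Vertices are indexed
by the natural numbers `0, 1, 2, …` in order of insertion. -/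

/-- The three kinds of operations of an lcw expression. -/
inductive LcwOp (L : Type) where
  | insert : L → LcwOp L
  | join : L → L → LcwOp L
  | relabel : L → L → LcwOp L

/-- The state while executing an lcw expression: the number `n` of vertices
inserted so far (the vertices are `0, …, n-1`), the adjacency relation built
so far, and the current labeling (`none` for indices not yet inserted). -/
structure LcwState (L : Type) where
  n : ℕ
  adj : ℕ → ℕ → Prop
  lab : ℕ → Option L

/-- The initial, empty state. -/
def LcwState.init (L : Type) : LcwState L :=
  ⟨0, fun _ _ => False, fun _ => none⟩

/-- Executing one operation. -/
def LcwState.step {L : Type} [DecidableEq L] (s : LcwState L) : LcwOp L → LcwState L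
  | .insert a => ⟨s.n + 1, s.adj, fun v => if v = s.n then some a else s.lab v⟩
  | .join i j =>
      ⟨s.n,
       fun u v => s.adj u v ∨
         (u ≠ v ∧ ((s.lab u = some i ∧ s.lab v = some j) ∨
                   (s.lab u = some j ∧ s.lab v = some i))),
       s.lab⟩
  | .relabel i j => ⟨s.n, s.adj, fun v => if s.lab v = some i then some j else s.lab v⟩

/-- Executing an lcw expression (a list of operations) from the empty state. -/
def runLcw {L : Type} [DecidableEq L] (e : List (LcwOp L)) : LcwState L :=
  e.foldl LcwState.step (LcwState.init L)

/-- Well-formedness: every edge-adding operation uses two distinct labels. -/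
def WfExpr {L : Type} (e : List (LcwOp L)) : Prop :=
  ∀ op ∈ e, ∀ i j : L, op = LcwOp.join i j → i ≠ j

/-- The expression `e` builds the graph `G`, where the bijection
`f` sends each vertex of `G` to its insertion index (so `f` records the
insertion order of the vertices). -/
def BuildsVia {L V : Type} [DecidableEq L] [Fintype V] (e : List (LcwOp L))
    (G : SimpleGraph V) (f : V → ℕ) : Prop :=
  WfExpr e ∧ Function.Injective f ∧ (runLcw e).n = Fintype.card V ∧
    (∀ v, f v < (runLcw e).n) ∧ ∀ u v, G.Adj u v ↔ (runLcw e).adj (f u) (f v)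

/-- The expression `e` builds the graph `G`. -/
def Builds {L V : Type} [DecidableEq L] [Fintype V] (e : List (LcwOp L))
    (G : SimpleGraph V) : Prop :=
  ∃ f : V → ℕ, BuildsVia e G f

/-- The linear clique-width of a finite graph: the least size of a label
alphabet over which some lcw expression builds `G`.  (An expression over
`Fin k` is an expression using `k` labels; an *efficient* expression for `G`
is one over `Fin (lcw G)`.) -/
noncomputable def lcw {V : Type} [Fintype V] (G : SimpleGraph V) : ℕ :=
  sInf {k : ℕ | ∃ e : List (LcwOp (Fin k)), Builds e G}

/-- `ℓ` is a sink label of the expression `e`: it is never used in an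
edge-adding operation and vertices labeled `ℓ` are never relabeled. -/
def SinkLabel {L : Type} (e : List (LcwOp L)) (ℓ : L) : Prop :=
  (∀ op ∈ e, ∀ i j : L, op = LcwOp.join i j → i ≠ ℓ ∧ j ≠ ℓ) ∧
  (∀ op ∈ e, ∀ j : L, op = LcwOp.relabel ℓ j → j = ℓ)

/-- An expression is sink-free if no label is a sink label. -/
def SinkFree {L : Type} (e : List (LcwOp L)) : Prop :=
  ∀ ℓ : L, ¬ SinkLabel e ℓ

/-- The disjoint union of two graphs. -/
def GraphDisjUnion {V W : Type} (G : SimpleGraph V) (H : SimpleGraph W) :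
    SimpleGraph (V ⊕ W) where
  Adj x y :=
    match x, y with
    | Sum.inl a, Sum.inl b => G.Adj a b
    | Sum.inr a, Sum.inr b => H.Adj a b
    | _, _ => False
  symm := by
    constructor
    rintro (a | a) (b | b) h
    · exact G.adj_symm h
    · exact h.elim
    · exact h.elim
    · exact H.adj_symm h
  loopless := by
    constructor
    rintro (a | a) h
    · exact G.irrefl h
    · exact H.irrefl h

/-- The join of two graphs: their disjoint union together with all edges
between the two sides. -/
def GraphJoin {V W : Type} (G : SimpleGraph V) (H : SimpleGraph W) :
    SimpleGraph (V ⊕ W) :=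
  (GraphDisjUnion Gᶜ Hᶜ)ᶜ

/-- `H` is (isomorphic to) an induced subgraph of `G`. -/
def InducedSubgraphOf {W V : Type} (H : SimpleGraph W) (G : SimpleGraph V) : Prop :=
  ∃ f : W ↪ V, ∀ a b : W, H.Adj a b ↔ G.Adj (f a) (f b)

/-- The path `P₄` on four vertices (edges 01, 12, 23). -/
def pathP4 : SimpleGraph (Fin 4) :=
  SimpleGraph.fromRel (fun a b => (b : ℕ) = (a : ℕ) + 1)

/-- The cycle `C₄` on four vertices (edges 01, 12, 23, 30). -/
def cycleC4 : SimpleGraph (Fin 4) :=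
  SimpleGraph.fromRel (fun a b => (b : ℕ) = (a : ℕ) + 1 ∨ ((a : ℕ) = 3 ∧ (b : ℕ) = 0))

/-- The graph `2K₂` (edges 01 and 23). -/
def twoK2 : SimpleGraph (Fin 4) :=
  SimpleGraph.fromRel (fun a b => ((a : ℕ) = 0 ∧ (b : ℕ) = 1) ∨ ((a : ℕ) = 2 ∧ (b : ℕ) = 3))

/-- Cographs: the graphs with no induced `P₄`. -/
def IsCograph {V : Type} (G : SimpleGraph V) : Prop :=
  ¬ InducedSubgraphOf pathP4 G

/-- Quasi-threshold (trivially perfect) graphs: no induced `P₄` and no induced `C₄`. -/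
def IsQuasiThreshold {V : Type} (G : SimpleGraph V) : Prop :=
  ¬ InducedSubgraphOf pathP4 G ∧ ¬ InducedSubgraphOf cycleC4 G

/-- Threshold graphs: no induced `P₄`, `C₄` or `2K₂`. -/
def IsThreshold {V : Type} (G : SimpleGraph V) : Prop :=
  ¬ InducedSubgraphOf pathP4 G ∧ ¬ InducedSubgraphOf cycleC4 G ∧ ¬ InducedSubgraphOf twoK2 G

/-- A finite graph, encoded with vertex set `Fin n`.  A *class* of graphs,
i.e. a set of finite graphs closed under isomorphism, is modelled as a
hereditary set of `FinGraph`s (hereditary sets are automatically closed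
under isomorphism). -/
def FinGraph : Type := Σ n : ℕ, SimpleGraph (Fin n)

/-- The complement of a finite graph. -/
def FinGraph.compl (G : FinGraph) : FinGraph := ⟨G.1, G.2ᶜ⟩

/-- The induced-subgraph order on finite graphs. -/
def IndF (H G : FinGraph) : Prop := InducedSubgraphOf H.2 G.2

/-- A set of finite graphs is hereditary if it is closed downward under the
induced subgraph order (in particular it is closed under isomorphism). -/
def Hereditary (C : Set FinGraph) : Prop :=
  ∀ G ∈ C, ∀ H : FinGraph, IndF H G → H ∈ C

/-- The finite graph `K` is isomorphic to the graph `G`. -/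
def IsoTo {V : Type} (K : FinGraph) (G : SimpleGraph V) : Prop :=
  ∃ e : Fin K.1 ≃ V, ∀ a b, K.2.Adj a b ↔ G.Adj (e a) (e b)

/-- The class `C` contains (a copy of) the graph `G`. -/
def MemUpToIso (C : Set FinGraph) {V : Type} (G : SimpleGraph V) : Prop :=
  ∃ K ∈ C, IsoTo K G

/-- `C` is closed under disjoint unions. -/
def ClosedUnderDisjointUnions (C : Set FinGraph) : Prop :=
  ∀ G ∈ C, ∀ H ∈ C, MemUpToIso C (GraphDisjUnion (Sigma.snd G) (Sigma.snd H))

/-- `C` is closed under joins. -/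
def ClosedUnderJoins (C : Set FinGraph) : Prop :=
  ∀ G ∈ C, ∀ H ∈ C, MemUpToIso C (GraphJoin (Sigma.snd G) (Sigma.snd H))

/-- `C` is atomic: it cannot be written as the union of two proper
hereditary subclasses. -/
def AtomicClass (C : Set FinGraph) : Prop :=
  ¬ ∃ D₁ D₂ : Set FinGraph, Hereditary D₁ ∧ Hereditary D₂ ∧
      D₁ ⊂ C ∧ D₂ ⊂ C ∧ C = D₁ ∪ D₂

/-- The inflation `G[H₁, …, Hₙ]` of a graph `G` on `Fin n` by graphs
`H i` (`i : Fin n`): substitute `H i` for the vertex `i` of `G`. -/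
def inflate {n : ℕ} (G : SimpleGraph (Fin n)) (m : Fin n → ℕ)
    (H : ∀ i : Fin n, SimpleGraph (Fin (m i))) :
    SimpleGraph (Σ i : Fin n, Fin (m i)) where
  Adj x y := (x.1 ≠ y.1 ∧ G.Adj x.1 y.1) ∨ ∃ h : x.1 = y.1, (H y.1).Adj (h ▸ x.2) y.2
  symm := by
    constructor
    rintro ⟨i, a⟩ ⟨j, b⟩ (⟨hne, hadj⟩ | ⟨h, hadj⟩)
    · exact Or.inl ⟨hne.symm, G.adj_symm hadj⟩
    · cases h
      exact Or.inr ⟨rfl, (H i).adj_symm hadj⟩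
  loopless := by
    constructor
    rintro ⟨i, a⟩ (⟨hne, _⟩ | ⟨h, hadj⟩)
    · exact hne rfl
    · exact (H i).irrefl hadj

/-- The inflation `C[D]` of the class `C` by the class `D`: all graphs
isomorphic to an inflation of a graph of `C` by graphs of `D`. -/
def classInflate (C D : Set FinGraph) : Set FinGraph :=
  {K | ∃ (n : ℕ) (G : SimpleGraph (Fin n)) (m : Fin n → ℕ)
        (H : ∀ i : Fin n, SimpleGraph (Fin (m i))),
      (⟨n, G⟩ : FinGraph) ∈ C ∧ (∀ i, (⟨m i, H i⟩ : FinGraph) ∈ D) ∧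
      IsoTo K (inflate G m H)}

/-- The class of threshold graphs (as finite graphs). -/
def thresholdClass : Set FinGraph := {G : FinGraph | IsThreshold G.2}

/-- Vertex types of the sequence witnessing unbounded linear clique-width:
`qtV 0` carries `G₁ = K₂` and `qtV (k+1)` carries
`G_{k+2} = K₁ ∗ ((G_{k+1} ∪ G_{k+1}) ∪ (G_{k+1} ∪ G_{k+1}))`. -/
def qtV : ℕ → Type
  | 0 => Fin 2
  | k + 1 => Unit ⊕ ((qtV k ⊕ qtV k) ⊕ (qtV k ⊕ qtV k))

instance qtVFintype : ∀ k : ℕ, Fintype (qtV k)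
  | 0 => inferInstanceAs (Fintype (Fin 2))
  | k + 1 =>
      letI := qtVFintype k
      inferInstanceAs (Fintype (Unit ⊕ ((qtV k ⊕ qtV k) ⊕ (qtV k ⊕ qtV k))))

/-- The graphs `G₁, G₂, …` of the paper, reindexed so that `qtG k = G_{k+1}`:
`qtG 0 = K₂` and `qtG (k+1) = K₁ ∗ ((qtG k ∪ qtG k) ∪ (qtG k ∪ qtG k))`. -/
def qtG : ∀ k : ℕ, SimpleGraph (qtV k)
  | 0 => (⊤ : SimpleGraph (Fin 2))
  | k + 1 =>
      GraphJoin (⊥ : SimpleGraph Unit)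
        (GraphDisjUnion (GraphDisjUnion (qtG k) (qtG k)) (GraphDisjUnion (qtG k) (qtG k)))

/-! ### Auxiliary development for statement_1 -/

section AuxLcw

variable {L : Type} [DecidableEq L]

/-- Basic invariants of states reachable from the initial state. -/
def GoodSt (s : LcwState L) : Prop :=
  (∀ v, (∃ a, s.lab v = some a) ↔ v < s.n) ∧
  (∀ u v, s.adj u v → u < s.n ∧ v < s.n) ∧
  (∀ u v, s.adj u v → s.adj v u)

lemma goodSt_init : GoodSt (LcwState.init L) := by
  refine ⟨fun v => ?_, fun u v h => h.elim, fun u v h => h.elim⟩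
  simp [LcwState.init]

lemma goodSt_step (s : LcwState L) (op : LcwOp L) (h : GoodSt s) : GoodSt (s.step op) := by
  obtain ⟨hdom, hbd, hsym⟩ := h
  cases op with
  | insert a =>
      refine ⟨fun v => ?_, fun u v hadj => ?_, fun u v hadj => hsym u v hadj⟩
      · simp only [LcwState.step]
        by_cases hv : v = s.n
        · subst hv; simp
        · simp only [if_neg hv]
          rw [hdom v]
          omega
      · have := hbd u v hadj
        simp only [LcwState.step]
        omega
  | join i j =>
      refine ⟨hdom, fun u v hadj => ?_, fun u v hadj => ?_⟩
      · rcases hadj with h | ⟨hne, h⟩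
        · exact hbd u v h
        · rcases h with ⟨h1, h2⟩ | ⟨h1, h2⟩ <;>
            exact ⟨(hdom u).mp ⟨_, h1⟩, (hdom v).mp ⟨_, h2⟩⟩
      · rcases hadj with h | ⟨hne, h⟩
        · exact Or.inl (hsym u v h)
        · exact Or.inr ⟨hne.symm, h.symm.imp And.symm And.symm⟩
  | relabel i j =>
      refine ⟨fun v => ?_, hbd, hsym⟩
      simp only [LcwState.step]
      rw [← hdom v]
      by_cases hv : s.lab v = some i <;> simp [hv]

lemma goodSt_run (l : List (LcwOp L)) (s : LcwState L) (h : GoodSt s) :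
    GoodSt (l.foldl LcwState.step s) := by
  induction l generalizing s with
  | nil => exact h
  | cons op rest ih => exact ih _ (goodSt_step s op h)

/-- Two vertices with the same label have the same future adjacency to any
fixed vertex `m` distinct from both. -/
lemma run_label_adj (l : List (LcwOp L)) : ∀ (s : LcwState L) (u w m : ℕ),
    u < s.n → w < s.n → u ≠ m → w ≠ m → s.lab u = s.lab w →
    (s.adj u m ↔ s.adj w m) → (s.adj m u ↔ s.adj m w) →
    ((l.foldl LcwState.step s).adj u m ↔ (l.foldl LcwState.step s).adj w m) := by
  induction l with
  | nil => intro s u w m _ _ _ _ _ h1 _; exact h1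
  | cons op rest ih =>
      intro s u w m hu hw hum hwm hlab h1 h2
      rw [List.foldl_cons]
      cases op with
      | insert a =>
          refine ih _ u w m ?_ ?_ hum hwm ?_ h1 h2
          · simp only [LcwState.step]; omega
          · simp only [LcwState.step]; omega
          · simp only [LcwState.step, if_neg (Nat.ne_of_lt hu), if_neg (Nat.ne_of_lt hw)]
            exact hlab
      | join i j =>
          refine ih _ u w m hu hw hum hwm hlab ?_ ?_
          · simp only [LcwState.step]
            rw [hlab, h1]
            simp [hum, hwm, Ne.symm hum, Ne.symm hwm]
          · simp only [LcwState.step]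
            rw [hlab, h2]
            simp [hum, hwm, Ne.symm hum, Ne.symm hwm]
      | relabel i j =>
          refine ih _ u w m hu hw hum hwm ?_ h1 h2
          simp only [LcwState.step]
          rw [hlab]

/-- A list of join operations. -/
def joinList (ps : List (L × L)) : List (LcwOp L) :=
  ps.map fun p => LcwOp.join p.1 p.2

lemma joinList_run (ps : List (L × L)) : ∀ s : LcwState L,
    ((joinList ps).foldl LcwState.step s).n = s.n ∧
    ((joinList ps).foldl LcwState.step s).lab = s.lab ∧
    ∀ u v, ((joinList ps).foldl LcwState.step s).adj u v ↔
      (s.adj u v ∨ ∃ p ∈ ps, u ≠ v ∧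
        ((s.lab u = some p.1 ∧ s.lab v = some p.2) ∨
         (s.lab u = some p.2 ∧ s.lab v = some p.1))) := by
  induction ps with
  | nil => intro s; simp [joinList]
  | cons p ps ih =>
      intro s
      have hstep : joinList (p :: ps) = LcwOp.join p.1 p.2 :: joinList ps := rfl
      obtain ⟨h1, h2, h3⟩ := ih (s.step (.join p.1 p.2))
      rw [hstep]
      simp only [List.foldl_cons]
      refine ⟨by simpa only [LcwState.step] using h1,
        by simpa only [LcwState.step] using h2, fun u v => ?_⟩
      rw [h3 u v]
      simp only [LcwState.step, List.exists_mem_cons_iff]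
      rw [or_assoc]

/-- A sequence of insert operations, inserting labels `f 0, f 1, …, f (m-1)`. -/
def insertSeq (f : ℕ → L) : ℕ → List (LcwOp L)
  | 0 => []
  | m + 1 => insertSeq f m ++ [.insert (f m)]

lemma insertSeq_run (f : ℕ → L) (m : ℕ) :
    ((insertSeq f m).foldl LcwState.step (LcwState.init L)).n = m ∧
    (∀ v, ((insertSeq f m).foldl LcwState.step (LcwState.init L)).lab v
        = if v < m then some (f v) else none) ∧
    ∀ u v, ¬ ((insertSeq f m).foldl LcwState.step (LcwState.init L)).adj u v := by
  induction m with
  | zero => exact ⟨rfl, fun v => by simp [insertSeq, LcwState.init], fun u v h => h⟩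
  | succ m ih =>
      obtain ⟨h1, h2, h3⟩ := ih
      rw [insertSeq, List.foldl_append]
      simp only [List.foldl_cons, List.foldl_nil]
      refine ⟨by simp only [LcwState.step]; omega, fun v => ?_, fun u v => h3 u v⟩
      simp only [LcwState.step, h1, h2]
      by_cases hv : v = m
      · subst hv; simp
      · simp only [if_neg hv]
        by_cases hlt : v < m
        · rw [if_pos hlt, if_pos (by omega)]
        · rw [if_neg hlt, if_neg (by omega)]

lemma mem_insertSeq (f : ℕ → L) (m : ℕ) (op : LcwOp L) (h : op ∈ insertSeq f m) :
    ∃ a, op = LcwOp.insert a := by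
  induction m with
  | zero => exact absurd h List.not_mem_nil
  | succ m ih =>
      rw [insertSeq, List.mem_append] at h
      rcases h with h | h
      · exact ih h
      · simp only [List.mem_singleton] at h
        exact ⟨f m, h⟩

end AuxLcw

section Compl

variable {k : ℕ}

/-- The labels whose class consists of final non-neighbours of the vertex
about to be inserted (vertex `s.n`). -/
noncomputable def sset (Fnl s : LcwState (Fin k)) : List (Fin k) :=
  (List.finRange k).filter fun b =>
    @decide (¬ ∃ u, u < s.n ∧ s.lab u = some b ∧ Fnl.adj u s.n) (Classical.propDecidable _)

lemma mem_sset (Fnl s : LcwState (Fin k)) (b : Fin k) :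
    b ∈ sset Fnl s ↔ ¬ ∃ u, u < s.n ∧ s.lab u = some b ∧ Fnl.adj u s.n := by
  simp only [sset, List.mem_filter, List.mem_finRange, true_and]
  rw [@decide_eq_true_eq _ (Classical.propDecidable _)]

/-- Translation of a single operation for the complement construction. -/
noncomputable def transOp (Fnl s : LcwState (Fin k)) : LcwOp (Fin k) → List (LcwOp (Fin (k + 1)))
  | .insert a =>
      .insert (Fin.last k) ::
        (joinList ((sset Fnl s).map fun b => (Fin.last k, b.castSucc)) ++
          [.relabel (Fin.last k) a.castSucc])
  | .join _ _ => []
  | .relabel i j => [.relabel i.castSucc j.castSucc]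

/-- The complement expression. -/
noncomputable def compileC (Fnl : LcwState (Fin k)) :
    List (LcwOp (Fin k)) → LcwState (Fin k) → List (LcwOp (Fin (k + 1)))
  | [], _ => []
  | op :: rest, s => transOp Fnl s op ++ compileC Fnl rest (s.step op)

/-- The simulation invariant relating the original state `s` to the state `s'`
of the complement expression. -/
def InvC (Fnl : LcwState (Fin k)) (s : LcwState (Fin k)) (s' : LcwState (Fin (k + 1))) : Prop :=
  s'.n = s.n ∧ (∀ v, s'.lab v = (s.lab v).map Fin.castSucc) ∧
  (∀ u v, s'.adj u v ↔ (u ≠ v ∧ u < s.n ∧ v < s.n ∧ ¬ Fnl.adj u v))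

lemma castSucc_ne_last (c : Fin k) : (Fin.castSucc c : Fin (k + 1)) ≠ Fin.last k :=
  (Fin.castSucc_lt_last c).ne

lemma compileC_inv (Fnl : LcwState (Fin k)) :
    ∀ (l : List (LcwOp (Fin k))) (s : LcwState (Fin k)) (s' : LcwState (Fin (k + 1))),
      GoodSt s → l.foldl LcwState.step s = Fnl → InvC Fnl s s' →
      InvC Fnl (l.foldl LcwState.step s) ((compileC Fnl l s).foldl LcwState.step s') := by
  intro l
  induction l with
  | nil => intro s s' _ _ hInv; exact hInv
  | cons op rest ih =>
      intro s s' hGood hrun hInv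
      have hrun' : rest.foldl LcwState.step (s.step op) = Fnl := by
        simpa using hrun
      rw [List.foldl_cons]
      have hfold : compileC Fnl (op :: rest) s
          = transOp Fnl s op ++ compileC Fnl rest (s.step op) := rfl
      rw [hfold, List.foldl_append]
      refine ih (s.step op) _ (goodSt_step s op hGood) hrun' ?_
      obtain ⟨hn', hlab', hadj'⟩ := hInv
      cases op with
      | join i j =>
          simp only [transOp, List.foldl_nil]
          refine ⟨by simp only [LcwState.step]; exact hn',
            by simp only [LcwState.step]; exact hlab', fun u v => ?_⟩
          simp only [LcwState.step]
          exact hadj' u v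
      | relabel i j =>
          simp only [transOp, List.foldl_cons, List.foldl_nil]
          refine ⟨by simp only [LcwState.step]; exact hn', fun v => ?_, fun u v => ?_⟩
          · simp only [LcwState.step, hlab' v]
            cases hsl : s.lab v with
            | none => simp
            | some c =>
                rw [Option.map_some]
                by_cases hc : c = i
                · subst hc; simp
                · rw [if_neg (by
                      intro h
                      exact hc (Fin.castSucc_injective k (Option.some_injective _ h))),
                    if_neg (by simpa using hc), Option.map_some]
          · simp only [LcwState.step]
            exact hadj' u v
      | insert a =>
          have hFnlGood : GoodSt Fnl := by rw [← hrun]; exact goodSt_run _ _ hGood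
          obtain ⟨hdom, hbd, hsym⟩ := hGood
          have key : ∀ u w, u < s.n → w < s.n → s.lab u = s.lab w →
              (Fnl.adj u s.n ↔ Fnl.adj w s.n) := by
            intro u w hu hw hl
            have h := run_label_adj rest (s.step (.insert a)) u w s.n
              (by simp only [LcwState.step]; omega)
              (by simp only [LcwState.step]; omega)
              (by omega) (by omega)
              (by simp only [LcwState.step, if_neg (Nat.ne_of_lt hu),
                    if_neg (Nat.ne_of_lt hw)]; exact hl)
              (by
                simp only [LcwState.step]
                exact iff_of_false (fun h => Nat.lt_irrefl s.n (hbd u s.n h).2)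
                  (fun h => Nat.lt_irrefl s.n (hbd w s.n h).2))
              (by
                simp only [LcwState.step]
                exact iff_of_false (fun h => Nat.lt_irrefl s.n (hbd s.n u h).1)
                  (fun h => Nat.lt_irrefl s.n (hbd s.n w h).1))
            rwa [hrun'] at h
          have claimC : ∀ v, v < s.n →
              ((∃ b ∈ sset Fnl s, s.lab v = some b) ↔ ¬ Fnl.adj v s.n) := by
            intro v hv
            obtain ⟨c, hc⟩ := (hdom v).mpr hv
            constructor
            · rintro ⟨b, hb, hvb⟩ hF
              exact (mem_sset Fnl s b).mp hb ⟨v, hv, hvb, hF⟩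
            · intro hF
              refine ⟨c, ?_, hc⟩
              rw [mem_sset]
              rintro ⟨u, hu, hlu, hFu⟩
              exact hF ((key u v hu hv (hlu.trans hc.symm)).mp hFu)
          have hfold2 : (transOp Fnl s (.insert a)).foldl LcwState.step s'
              = ((joinList ((sset Fnl s).map fun b => (Fin.last k, b.castSucc))).foldl
                  LcwState.step (s'.step (.insert (Fin.last k)))).step
                  (.relabel (Fin.last k) (a.castSucc)) := by
            simp only [transOp, List.foldl_cons, List.foldl_append, List.foldl_nil]
          rw [hfold2]
          set s1 := s'.step (.insert (Fin.last k)) with hs1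
          obtain ⟨jn, jlab, jadj⟩ :=
            joinList_run ((sset Fnl s).map fun b => (Fin.last k, b.castSucc)) s1
          have hs1n : s1.n = s.n + 1 := by
            simp only [hs1, LcwState.step, hn']
          have hs1lab : ∀ v, s1.lab v
              = if v = s.n then some (Fin.last k) else (s.lab v).map Fin.castSucc := by
            intro v
            simp only [hs1, LcwState.step, hn', hlab' v]
          have hs1adj : ∀ u v, s1.adj u v ↔ s'.adj u v := by
            intro u v; simp only [hs1, LcwState.step]
          have labm : ∀ v, s1.lab v = some (Fin.last k) ↔ v = s.n := by
            intro v
            rw [hs1lab v]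
            by_cases hv : v = s.n
            · simp [hv]
            · simp only [if_neg hv, hv, iff_false]
              intro h
              obtain ⟨c, -, hcl⟩ := Option.map_eq_some_iff.mp h
              exact castSucc_ne_last c hcl
          refine ⟨?_, fun v => ?_, fun u v => ?_⟩
          · simp only [LcwState.step, jn, hs1n]
          · simp only [LcwState.step, jlab, hs1lab v, hn']
            by_cases hv : v = s.n
            · simp [hv]
            · rw [if_neg hv, if_neg hv]
              have hnl : ¬ ((s.lab v).map Fin.castSucc = some (Fin.last k)) := by
                intro h
                obtain ⟨c, -, hcl⟩ := Option.map_eq_some_iff.mp h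
                exact castSucc_ne_last c hcl
              rw [if_neg hnl]
          · simp only [LcwState.step, jadj u v]
            constructor
            · rintro (h | ⟨p, hp, hne, hcase⟩)
              · obtain ⟨hne, hu, hv, hF⟩ := (hadj' u v).mp ((hs1adj u v).mp h)
                exact ⟨hne, by omega, by omega, hF⟩
              · obtain ⟨b, hb, rfl⟩ := List.mem_map.mp hp
                rcases hcase with ⟨h1, h2⟩ | ⟨h1, h2⟩
                · have hu : u = s.n := (labm u).mp h1
                  have hvm : v ≠ s.n := fun h => hne (hu.trans h.symm)
                  rw [hs1lab v, if_neg hvm] at h2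
                  obtain ⟨c, hc1, hc2⟩ := Option.map_eq_some_iff.mp h2
                  have hcb : c = b := Fin.castSucc_injective k hc2
                  subst hcb
                  have hvlt : v < s.n := (hdom v).mp ⟨c, hc1⟩
                  have hnF : ¬ Fnl.adj v s.n := (claimC v hvlt).mp ⟨c, hb, hc1⟩
                  refine ⟨hne, by omega, by omega, ?_⟩
                  subst hu
                  exact fun h => hnF (hFnlGood.2.2 _ _ h)
                · have hv : v = s.n := (labm v).mp h2
                  have hum : u ≠ s.n := fun h => hne (h.trans hv.symm)
                  rw [hs1lab u, if_neg hum] at h1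
                  obtain ⟨c, hc1, hc2⟩ := Option.map_eq_some_iff.mp h1
                  have hcb : c = b := Fin.castSucc_injective k hc2
                  subst hcb
                  have hult : u < s.n := (hdom u).mp ⟨c, hc1⟩
                  have hnF : ¬ Fnl.adj u s.n := (claimC u hult).mp ⟨c, hb, hc1⟩
                  refine ⟨hne, by omega, by omega, ?_⟩
                  subst hv
                  exact hnF
            · rintro ⟨hne, hu, hv, hF⟩
              by_cases hum : u = s.n
              · have hvm : v ≠ s.n := fun h => hne (hum.trans h.symm)
                have hvlt : v < s.n := by omega
                have hC : ∃ b ∈ sset Fnl s, s.lab v = some b :=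
                  (claimC v hvlt).mpr (fun h => (hum ▸ hF) (hFnlGood.2.2 _ _ h))
                obtain ⟨b, hb, hbl⟩ := hC
                refine Or.inr ⟨(Fin.last k, b.castSucc), List.mem_map.mpr ⟨b, hb, rfl⟩,
                  hne, Or.inl ⟨(labm u).mpr hum, ?_⟩⟩
                rw [hs1lab v, if_neg hvm, hbl, Option.map_some]
              · by_cases hvm : v = s.n
                · have hult : u < s.n := by omega
                  have hC : ∃ b ∈ sset Fnl s, s.lab u = some b :=
                    (claimC u hult).mpr (hvm ▸ hF)
                  obtain ⟨b, hb, hbl⟩ := hC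
                  refine Or.inr ⟨(Fin.last k, b.castSucc), List.mem_map.mpr ⟨b, hb, rfl⟩,
                    hne, Or.inr ⟨?_, (labm v).mpr hvm⟩⟩
                  rw [hs1lab u, if_neg hum, hbl, Option.map_some]
                · exact Or.inl ((hs1adj u v).mpr
                    ((hadj' u v).mpr ⟨hne, by omega, by omega, hF⟩))

lemma compileC_wf (Fnl : LcwState (Fin k)) (l : List (LcwOp (Fin k))) (s : LcwState (Fin k)) :
    WfExpr (compileC Fnl l s) := by
  induction l generalizing s with
  | nil => intro op h; exact absurd h List.not_mem_nil
  | cons op rest ih =>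
      intro op' hmem i j heq hij
      rw [show compileC Fnl (op :: rest) s
          = transOp Fnl s op ++ compileC Fnl rest (s.step op) from rfl,
        List.mem_append] at hmem
      rcases hmem with hmem | hmem
      · cases op with
        | insert a =>
            simp only [transOp, List.mem_cons, List.mem_append, List.mem_singleton] at hmem
            rcases hmem with rfl | hmem | rfl | hmem
            · exact (by cases heq)
            · obtain ⟨p, hp, rfl⟩ := List.mem_map.mp hmem
              obtain ⟨b, hb, rfl⟩ := List.mem_map.mp hp
              injection heq with e1 e2
              subst e1; subst e2
              exact castSucc_ne_last b hij.symm
            · exact (by cases heq)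
            · exact absurd hmem List.not_mem_nil
        | join i' j' => exact absurd hmem List.not_mem_nil
        | relabel i' j' =>
            simp only [transOp, List.mem_singleton] at hmem
            subst hmem
            exact (by cases heq)
      · exact ih (s.step op) op' hmem i j heq hij

lemma builds_compl {V : Type} [Fintype V] (G : SimpleGraph V)
    (e : List (LcwOp (Fin k))) (h : Builds e G) :
    ∃ e' : List (LcwOp (Fin (k + 1))), Builds e' Gᶜ := by
  obtain ⟨f, hwf, hinj, hcard, hlt, hadj⟩ := h
  refine ⟨compileC (runLcw e) e (LcwState.init _), f, compileC_wf _ _ _, hinj, ?_, ?_, ?_⟩ <;>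
  · have hinv := compileC_inv (runLcw e) e (LcwState.init _) (LcwState.init _)
      goodSt_init rfl
      ⟨rfl, fun _ => rfl, fun u v => by simp [LcwState.init]⟩
    obtain ⟨hn', hlab', hadj'⟩ := hinv
    first
    | exact hn'.trans hcard
    | exact fun v => hn' ▸ hlt v
    | · intro u v
        rw [show runLcw (compileC (runLcw e) e (LcwState.init _))
            = (compileC (runLcw e) e (LcwState.init _)).foldl LcwState.step
                (LcwState.init _) from rfl,
          hadj' (f u) (f v), SimpleGraph.compl_adj]
        constructor
        · rintro ⟨hne, hA⟩
          exact ⟨fun h => hne (hinj h), hlt u, hlt v, fun h => hA ((hadj u v).mpr h)⟩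
        · rintro ⟨hne, -, -, hA⟩
          exact ⟨fun h => hne (congrArg f h), fun h => hA ((hadj u v).mp h)⟩

lemma exists_builds {V : Type} [Fintype V] (G : SimpleGraph V) :
    ∃ (k : ℕ) (e : List (LcwOp (Fin k))), Builds e G := by
  rcases Nat.eq_zero_or_pos (Fintype.card V) with h0 | hn
  · haveI : IsEmpty V := Fintype.card_eq_zero_iff.mp h0
    refine ⟨0, [], fun v => isEmptyElim v, ?_, fun a b h => isEmptyElim a, ?_,
      fun v => isEmptyElim v, fun u v => isEmptyElim u⟩
    · intro op h; exact absurd h List.not_mem_nil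
    · exact h0.symm
  · set n := Fintype.card V with hncard
    set g := Fintype.equivFin V with hg
    set labf : ℕ → Fin n := fun v => ⟨v % n, Nat.mod_lt _ hn⟩ with hlabf
    set ps := ((List.finRange n).product (List.finRange n)).filter
      (fun p => @decide (G.Adj (g.symm p.1) (g.symm p.2)) (Classical.propDecidable _))
      with hps
    have mem_ps : ∀ p : Fin n × Fin n, p ∈ ps ↔ G.Adj (g.symm p.1) (g.symm p.2) := by
      rintro ⟨p1, p2⟩
      rw [hps, List.mem_filter]
      rw [@decide_eq_true_eq _ (Classical.propDecidable _)]
      simp [List.pair_mem_product, List.mem_finRange]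
    obtain ⟨h1, h2, h3⟩ := insertSeq_run labf n
    set s₀ := (insertSeq labf n).foldl LcwState.step (LcwState.init (Fin n)) with hs₀
    have labval : ∀ v : V, s₀.lab ((g v : ℕ)) = some (g v) := by
      intro v
      rw [h2]
      rw [if_pos (g v).isLt]
      congr 1
      exact Fin.ext (Nat.mod_eq_of_lt (g v).isLt)
    obtain ⟨jn, jlab, jadj⟩ := joinList_run ps s₀
    have hrun : runLcw (insertSeq labf n ++ joinList ps)
        = (joinList ps).foldl LcwState.step s₀ := by
      rw [runLcw, List.foldl_append]
    refine ⟨n, insertSeq labf n ++ joinList ps, fun v => (g v : ℕ), ?_,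
      fun a b h => g.injective (Fin.val_injective h), ?_, ?_, ?_⟩
    · intro op hmem i j heq
      rw [List.mem_append] at hmem
      rcases hmem with hmem | hmem
      · obtain ⟨a, rfl⟩ := mem_insertSeq labf n op hmem
        exact (by cases heq)
      · obtain ⟨p, hp, rfl⟩ := List.mem_map.mp hmem
        injection heq with e1 e2
        subst e1; subst e2
        intro hij
        exact ((mem_ps p).mp hp).ne (congrArg g.symm hij)
    · rw [hrun, jn, h1]
    · intro v
      rw [hrun, jn, h1]
      exact (g v).isLt
    · intro u v
      rw [hrun, jadj]
      constructor
      · intro hA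
        refine Or.inr ⟨(g u, g v), (mem_ps _).mpr (by
            simpa using hA),
          fun h => hA.ne (g.injective (Fin.val_injective h)),
          Or.inl ⟨labval u, labval v⟩⟩
      · rintro (h | ⟨p, hp, hne, ⟨ha, hb⟩ | ⟨ha, hb⟩⟩)
        · exact absurd h (h3 _ _)
        · rw [labval u] at ha
          rw [labval v] at hb
          have e1 : p.1 = g u := (Option.some_inj.mp ha).symm
          have e2 : p.2 = g v := (Option.some_inj.mp hb).symm
          have hA := (mem_ps p).mp hp
          rw [e1, e2] at hA
          simpa using hA
        · rw [labval u] at ha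
          rw [labval v] at hb
          have e1 : p.2 = g u := (Option.some_inj.mp ha).symm
          have e2 : p.1 = g v := (Option.some_inj.mp hb).symm
          have hA := (mem_ps p).mp hp
          rw [e1, e2] at hA
          simp only [Equiv.symm_apply_apply] at hA
          exact hA.symm

lemma lcw_compl_le {V : Type} [Fintype V] (G : SimpleGraph V) :
    lcw Gᶜ ≤ lcw G + 1 := by
  obtain ⟨k0, e0, h0⟩ := exists_builds G
  have hne : {k : ℕ | ∃ e : List (LcwOp (Fin k)), Builds e G}.Nonempty := ⟨k0, e0, h0⟩
  have hmem : ∃ e : List (LcwOp (Fin (lcw G))), Builds e G := Nat.sInf_mem hne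
  obtain ⟨e, he⟩ := hmem
  obtain ⟨e', he'⟩ := builds_compl G e he
  exact Nat.sInf_le ⟨e', he'⟩

end Compl

/-- for every finite graph `G`,
`lcw G - 1 ≤ lcw Gᶜ ≤ lcw G + 1`. -/
theorem statement_1 {V : Type} [Fintype V] (G : SimpleGraph V) :
    lcw G - 1 ≤ lcw Gᶜ ∧ lcw Gᶜ ≤ lcw G + 1 := by
  have h2 := lcw_compl_le G
  have h1 := lcw_compl_le Gᶜ
  rw [compl_compl] at h1
  exact ⟨by omega, h2⟩
end

section
/- In the process of building a finite graph G via any efficient lcw expression, there is a point in the process at which all lcw(G) labels are simultaneously in use (that is, each of the lcw(G) labels currently labels at least one vertex). -/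
def UsedLab {L : Type} (s : LcwState L) (ℓ : L) : Prop := ∃ v, s.lab v = some ℓ

structure SimInv {k : ℕ} (s : LcwState (Fin (k+1))) (s' : LcwState (Fin k))
    (σ : Fin (k+1) → Fin k) : Prop where
  hn : s'.n = s.n
  hadj : s'.adj = s.adj
  hlab : ∀ v, s'.lab v = (s.lab v).map σ
  hnone : ∀ v, s.n ≤ v → s.lab v = none
  hinj : ∀ m₁ m₂, UsedLab s m₁ → UsedLab s m₂ → σ m₁ = σ m₂ → m₁ = m₂

lemma runLcw_concat {L : Type} [DecidableEq L] (e : List (LcwOp L)) (op : LcwOp L) :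
    runLcw (e ++ [op]) = (runLcw e).step op := by
  simp [runLcw]

lemma step_sim {k : ℕ} (hk : 0 < k) {s : LcwState (Fin (k+1))} {s' : LcwState (Fin k)}
    {σ : Fin (k+1) → Fin k} (inv : SimInv s s' σ) (op : LcwOp (Fin (k+1)))
    (hwf : ∀ i j : Fin (k+1), op = LcwOp.join i j → i ≠ j)
    (hfree : ∃ ℓ, ¬ UsedLab (s.step op) ℓ) :
    ∃ (ops : List (LcwOp (Fin k))) (σ' : Fin (k+1) → Fin k),
      (∀ o ∈ ops, ∀ i j : Fin k, o = LcwOp.join i j → i ≠ j) ∧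
      SimInv (s.step op) (List.foldl LcwState.step s' ops) σ' := by
  classical
  obtain ⟨hn, hadj, hlab, hnone, hinj⟩ := inv
  cases op with
  | insert a =>
    have hused : ∀ ℓ, UsedLab (s.step (.insert a)) ℓ ↔ ℓ = a ∨ UsedLab s ℓ := by
      intro ℓ
      constructor
      · rintro ⟨v, hv⟩
        simp only [LcwState.step] at hv
        by_cases h : v = s.n
        · rw [if_pos h] at hv
          exact Or.inl (Option.some_injective _ hv).symm
        · rw [if_neg h] at hv
          exact Or.inr ⟨v, hv⟩
      · rintro (rfl | ⟨v, hv⟩)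
        · exact ⟨s.n, by simp [LcwState.step]⟩
        · refine ⟨v, ?_⟩
          have h : v ≠ s.n := by
            intro h; rw [h, hnone s.n le_rfl] at hv; cases hv
          simp [LcwState.step, h, hv]
    by_cases ha : UsedLab s a
    · refine ⟨[LcwOp.insert (σ a)], σ, by simp, ?_, ?_, ?_, ?_, ?_⟩
      · simp [LcwState.step, hn]
      · simp [LcwState.step, hadj]
      · intro v
        simp only [LcwState.step, List.foldl, hn]
        by_cases hv : v = s.n <;> simp [hv, hlab v]
      · intro v hv
        simp only [LcwState.step] at hv ⊢
        have h1 : v ≠ s.n := by omega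
        simp [h1, hnone v (by omega)]
      · intro m₁ m₂ h₁ h₂ hσ
        rw [hused] at h₁ h₂
        have h₁' : UsedLab s m₁ := by rcases h₁ with rfl | h₁ <;> [exact ha; exact h₁]
        have h₂' : UsedLab s m₂ := by rcases h₂ with rfl | h₂ <;> [exact ha; exact h₂]
        exact hinj _ _ h₁' h₂' hσ
    · -- need a fresh label
      obtain ⟨ℓ₀, hℓ₀⟩ := hfree
      have hℓa : ℓ₀ ≠ a := by
        intro h; exact hℓ₀ ((hused ℓ₀).mpr (Or.inl h))
      have hℓu : ¬ UsedLab s ℓ₀ := fun h => hℓ₀ ((hused ℓ₀).mpr (Or.inr h))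
      set U : Finset (Fin (k+1)) := Finset.univ.filter (fun m => UsedLab s m) with hU
      have hUsub : U ⊆ Finset.univ \ {a, ℓ₀} := by
        intro m hm
        rw [hU, Finset.mem_filter] at hm
        rw [Finset.mem_sdiff]
        refine ⟨Finset.mem_univ _, ?_⟩
        simp only [Finset.mem_insert, Finset.mem_singleton]
        rintro (rfl | rfl)
        · exact ha hm.2
        · exact hℓu hm.2
      have hUcard : U.card ≤ k - 1 := by
        have h2 : ({a, ℓ₀} : Finset (Fin (k+1))).card = 2 := by
          rw [Finset.card_insert_of_notMem (by simp [hℓa.symm])]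
          simp
        have := Finset.card_le_card hUsub
        rw [Finset.card_sdiff_of_subset (by simp)] at this
        simp only [Finset.card_univ, Fintype.card_fin] at this
        omega
      have himg : (U.image σ).card < k := by
        have := Finset.card_image_le (s := U) (f := σ)
        omega
      have : ∃ c : Fin k, c ∉ U.image σ := by
        by_contra hc
        push_neg at hc
        have heq : U.image σ = Finset.univ := Finset.eq_univ_iff_forall.mpr hc
        rw [heq, Finset.card_univ, Fintype.card_fin] at himg
        omega
      obtain ⟨c, hc⟩ := this
      have hcfresh : ∀ m, UsedLab s m → σ m ≠ c := by
        intro m hm h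
        exact hc (Finset.mem_image.mpr ⟨m, by rw [hU]; simp [hm], h⟩)
      refine ⟨[LcwOp.insert c], Function.update σ a c, by simp, ?_, ?_, ?_, ?_, ?_⟩
      · simp [LcwState.step, hn]
      · simp [LcwState.step, hadj]
      · intro v
        simp only [LcwState.step, List.foldl, hn]
        by_cases hv : v = s.n
        · simp [hv]
        · rw [if_neg hv, if_neg hv, hlab v]
          cases hlv : s.lab v with
          | none => simp
          | some m =>
            have hm : m ≠ a := fun h => ha ⟨v, by rw [hlv, h]⟩
            simp [Function.update_of_ne hm]
      · intro v hv
        simp only [LcwState.step] at hv ⊢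
        have h1 : v ≠ s.n := by omega
        simp [h1, hnone v (by omega)]
      · intro m₁ m₂ h₁ h₂ hσ
        rw [hused] at h₁ h₂
        rcases h₁ with rfl | h₁ <;> rcases h₂ with rfl | h₂
        · rfl
        · exfalso
          rw [Function.update_self] at hσ
          have hm2 : m₂ ≠ m₁ := fun h => ha (h ▸ h₂)
          rw [Function.update_of_ne hm2] at hσ
          exact hcfresh _ h₂ hσ.symm
        · exfalso
          rw [Function.update_self] at hσ
          have hm1 : m₁ ≠ m₂ := fun h => ha (h ▸ h₁)
          rw [Function.update_of_ne hm1] at hσ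
          exact hcfresh _ h₁ hσ
        · have hm1 : m₁ ≠ a := fun h => ha (h ▸ h₁)
          have hm2 : m₂ ≠ a := fun h => ha (h ▸ h₂)
          rw [Function.update_of_ne hm1, Function.update_of_ne hm2] at hσ
          exact hinj _ _ h₁ h₂ hσ
  | join i j =>
    have hij : i ≠ j := hwf i j rfl
    by_cases hu : UsedLab s i ∧ UsedLab s j
    · obtain ⟨hi, hj⟩ := hu
      have hkey : ∀ (m : Fin (k+1)) (v : ℕ), UsedLab s m →
          ((s.lab v).map σ = some (σ m) ↔ s.lab v = some m) := by
        intro m v hm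
        constructor
        · intro h
          cases hlv : s.lab v with
          | none => rw [hlv] at h; cases h
          | some m' =>
            rw [hlv] at h
            simp only [Option.map_some] at h
            exact congrArg some (hinj m' m ⟨v, hlv⟩ hm (Option.some_injective _ h))
        · intro h; rw [h]; rfl
      refine ⟨[LcwOp.join (σ i) (σ j)], σ, ?_, ?_, ?_, ?_, ?_, ?_⟩
      · intro o ho i' j' hoe
        simp only [List.mem_singleton] at ho
        subst ho
        cases hoe
        intro h
        exact hij (hinj _ _ hi hj h)
      · simp [LcwState.step, hn]
      · simp only [LcwState.step, List.foldl]
        funext u v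
        rw [hadj]
        have h1 := hkey i u hi
        have h2 := hkey j v hj
        have h3 := hkey j u hj
        have h4 := hkey i v hi
        rw [hlab u, hlab v] at *
        apply propext
        constructor
        · rintro (h | ⟨hne, (⟨ha1, ha2⟩ | ⟨ha1, ha2⟩)⟩)
          · exact Or.inl h
          · exact Or.inr ⟨hne, Or.inl ⟨h1.mp ha1, h2.mp ha2⟩⟩
          · exact Or.inr ⟨hne, Or.inr ⟨h3.mp ha1, h4.mp ha2⟩⟩
        · rintro (h | ⟨hne, (⟨ha1, ha2⟩ | ⟨ha1, ha2⟩)⟩)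
          · exact Or.inl h
          · exact Or.inr ⟨hne, Or.inl ⟨h1.mpr ha1, h2.mpr ha2⟩⟩
          · exact Or.inr ⟨hne, Or.inr ⟨h3.mpr ha1, h4.mpr ha2⟩⟩
      · intro v; simp only [LcwState.step, List.foldl]; exact hlab v
      · intro v hv; exact hnone v hv
      · intro m₁ m₂ h₁ h₂ hσ; exact hinj _ _ h₁ h₂ hσ
    · -- join is a no-op
      refine ⟨[], σ, by simp, ?_, ?_, ?_, ?_, ?_⟩
      · simp only [LcwState.step, List.foldl]; exact hn
      · simp only [LcwState.step, List.foldl]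
        rw [hadj]
        funext u v
        apply propext
        constructor
        · intro h; exact Or.inl h
        · rintro (h | ⟨hne, (⟨ha1, ha2⟩ | ⟨ha1, ha2⟩)⟩)
          · exact h
          · exact absurd ⟨⟨u, ha1⟩, ⟨v, ha2⟩⟩ hu
          · exact absurd ⟨⟨v, ha2⟩, ⟨u, ha1⟩⟩ hu
      · intro v; simp only [LcwState.step, List.foldl]; exact hlab v
      · intro v hv; exact hnone v hv
      · intro m₁ m₂ h₁ h₂ hσ; exact hinj _ _ h₁ h₂ hσ
  | relabel i j =>
    by_cases hnoop : ¬ UsedLab s i ∨ i = j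
    · have hlab' : (s.step (.relabel i j)).lab = s.lab := by
        funext v
        simp only [LcwState.step]
        by_cases h : s.lab v = some i
        · rcases hnoop with hni | rfl
          · exact absurd ⟨v, h⟩ hni
          · rw [if_pos h, h]
        · rw [if_neg h]
      refine ⟨[], σ, by simp, ?_, ?_, ?_, ?_, ?_⟩
      · simp only [LcwState.step, List.foldl]; exact hn
      · simp only [LcwState.step, List.foldl]; exact hadj
      · intro v
        simp only [List.foldl]
        rw [hlab v]
        have : (s.step (.relabel i j)).lab v = s.lab v := by rw [hlab']
        simp only [LcwState.step] at this ⊢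
        rw [this]
      · intro v hv
        simp only [LcwState.step] at hv ⊢
        rw [hnone v hv]
        simp
      · intro m₁ m₂ h₁ h₂ hσ
        have e1 : UsedLab (s.step (.relabel i j)) m₁ = UsedLab s m₁ := by
          unfold UsedLab; rw [hlab']
        have e2 : UsedLab (s.step (.relabel i j)) m₂ = UsedLab s m₂ := by
          unfold UsedLab; rw [hlab']
        exact hinj _ _ (e1 ▸ h₁) (e2 ▸ h₂) hσ
    · push_neg at hnoop
      obtain ⟨hi, hij⟩ := hnoop
      have husedafter : ∀ m, UsedLab (s.step (.relabel i j)) m →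
          m = j ∨ (UsedLab s m ∧ m ≠ i) := by
        rintro m ⟨v, hv⟩
        simp only [LcwState.step] at hv
        by_cases h : s.lab v = some i
        · rw [if_pos h] at hv
          exact Or.inl (Option.some_injective _ hv).symm
        · rw [if_neg h] at hv
          right
          refine ⟨⟨v, hv⟩, ?_⟩
          intro hmi; rw [hmi] at hv; exact h hv
      by_cases hj : UsedLab s j
      · refine ⟨[LcwOp.relabel (σ i) (σ j)], σ, by simp, ?_, ?_, ?_, ?_, ?_⟩
        · simp only [LcwState.step, List.foldl]; exact hn
        · simp only [LcwState.step, List.foldl]; exact hadj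
        · intro v
          simp only [LcwState.step, List.foldl]
          rw [hlab v]
          cases hlv : s.lab v with
          | none => simp
          | some m =>
            by_cases hm : m = i
            · subst hm; simp
            · have h2 : σ m ≠ σ i := fun h => hm (hinj _ _ ⟨v, hlv⟩ hi h)
              simp [hm, h2]
        · intro v hv
          simp only [LcwState.step] at hv ⊢
          rw [hnone v hv]; simp
        · intro m₁ m₂ h₁ h₂ hσ
          have h₁' : UsedLab s m₁ := by
            rcases husedafter _ h₁ with rfl | ⟨h, _⟩ <;> [exact hj; exact h]
          have h₂' : UsedLab s m₂ := by
            rcases husedafter _ h₂ with rfl | ⟨h, _⟩ <;> [exact hj; exact h]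
          exact hinj _ _ h₁' h₂' hσ
      · -- relabel to unused target: just redirect σ
        refine ⟨[], Function.update σ j (σ i), by simp, ?_, ?_, ?_, ?_, ?_⟩
        · simp only [LcwState.step, List.foldl]; exact hn
        · simp only [LcwState.step, List.foldl]; exact hadj
        · intro v
          simp only [LcwState.step, List.foldl]
          rw [hlab v]
          cases hlv : s.lab v with
          | none => simp
          | some m =>
            by_cases hm : m = i
            · subst hm; simp [Function.update_self]
            · have hmj : m ≠ j := fun h => hj ⟨v, h ▸ hlv⟩
              simp [hm, Function.update_of_ne hmj]
        · intro v hv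
          simp only [LcwState.step] at hv ⊢
          rw [hnone v hv]; simp
        · intro m₁ m₂ h₁ h₂ hσ
          have key : ∀ m, UsedLab s m → m ≠ j := fun m hm h => hj (h ▸ hm)
          rcases husedafter _ h₁ with rfl | ⟨hu1, hn1⟩ <;>
            rcases husedafter _ h₂ with rfl | ⟨hu2, hn2⟩
          · rfl
          · exfalso
            rw [Function.update_self, Function.update_of_ne (key _ hu2)] at hσ
            exact hn2 (hinj _ _ hu2 hi hσ.symm)
          · exfalso
            rw [Function.update_self, Function.update_of_ne (key _ hu1)] at hσ
            exact hn1 (hinj _ _ hu1 hi hσ)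
          · rw [Function.update_of_ne (key _ hu1),
                Function.update_of_ne (key _ hu2)] at hσ
            exact hinj _ _ hu1 hu2 hσ

lemma runLcw_append {L : Type} [DecidableEq L] (e₁ e₂ : List (LcwOp L)) :
    runLcw (e₁ ++ e₂) = e₂.foldl LcwState.step (runLcw e₁) := by
  simp [runLcw]

lemma sim_all {k : ℕ} (hk : 0 < k) (e : List (LcwOp (Fin (k+1)))) (hwf : WfExpr e)
    (hfree : ∀ t ≤ e.length, ∃ ℓ : Fin (k+1), ∀ v, (runLcw (e.take t)).lab v ≠ some ℓ) :
    ∃ (e' : List (LcwOp (Fin k))) (σ : Fin (k+1) → Fin k),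
      WfExpr e' ∧ SimInv (runLcw e) (runLcw e') σ := by
  revert hwf hfree
  induction e using List.reverseRecOn with
  | nil =>
    intro hwf hfree
    refine ⟨[], fun _ => ⟨0, hk⟩, fun op h => absurd h List.not_mem_nil,
      rfl, rfl, fun v => rfl, fun v _ => rfl, ?_⟩
    rintro m₁ m₂ ⟨v, hv⟩ _ _
    exact absurd hv (by simp [runLcw, LcwState.init])
  | append_singleton e₀ op ih =>
    intro hwf hfree
    have hwf₀ : WfExpr e₀ := fun o ho => hwf o (List.mem_append_left _ ho)
    have hfree₀ : ∀ t ≤ e₀.length, ∃ ℓ : Fin (k+1), ∀ v,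
        (runLcw (e₀.take t)).lab v ≠ some ℓ := by
      intro t ht
      have h := hfree t (by simp; omega)
      rwa [List.take_append_of_le_length ht] at h
    obtain ⟨e', σ, hwf', inv⟩ := ih hwf₀ hfree₀
    have hfull := hfree (e₀ ++ [op]).length le_rfl
    rw [List.take_length] at hfull
    obtain ⟨ℓ, hℓ⟩ := hfull
    rw [runLcw_concat] at hℓ
    obtain ⟨ops, σ', hwfops, inv'⟩ := step_sim hk inv op
      (fun i j hop => hwf op (by simp) i j hop)
      ⟨ℓ, fun h => Exists.elim h (fun v hv => hℓ v hv)⟩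
    refine ⟨e' ++ ops, σ', ?_, ?_⟩
    · intro o ho i j hoe
      rcases List.mem_append.mp ho with h | h
      · exact hwf' o h i j hoe
      · exact hwfops o h i j hoe
    · rw [runLcw_concat, runLcw_append]
      exact inv'

lemma lab_of_lt {L : Type} [DecidableEq L] (e : List (LcwOp L)) :
    ∀ v < (runLcw e).n, ∃ m, (runLcw e).lab v = some m := by
  have main : ∀ (l : List (LcwOp L)) (s : LcwState L),
      (∀ v < s.n, ∃ m, s.lab v = some m) →
      ∀ v < (l.foldl LcwState.step s).n, ∃ m, (l.foldl LcwState.step s).lab v = some m := by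
    intro l
    induction l with
    | nil => intro s hs; exact hs
    | cons op l ihl =>
      intro s hs
      apply ihl
      cases op with
      | insert a =>
        intro v hv
        simp only [LcwState.step] at hv ⊢
        by_cases h : v = s.n
        · exact ⟨a, by simp [h]⟩
        · obtain ⟨m, hm⟩ := hs v (by omega)
          exact ⟨m, by simp [h, hm]⟩
      | join i j => intro v hv; exact hs v hv
      | relabel i j =>
        intro v hv
        simp only [LcwState.step] at hv ⊢
        obtain ⟨m, hm⟩ := hs v hv
        by_cases h : s.lab v = some i
        · exact ⟨j, by simp [h]⟩
        · exact ⟨m, by rw [if_neg h]; exact hm⟩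
  intro v hv
  exact main e (LcwState.init L) (fun v hv => absurd hv (Nat.not_lt_zero v)) v hv

lemma key_false {V : Type} [Fintype V] (G : SimpleGraph V) (k : ℕ) (hkG : lcw G = k)
    (e : List (LcwOp (Fin k))) (he : Builds e G)
    (h : ∀ t ≤ e.length, ∃ ℓ : Fin k, ∀ v, (runLcw (e.take t)).lab v ≠ some ℓ) : False := by
  obtain ⟨f, hwf, hinjf, hcard, hlt, hadj⟩ := he
  match k, hkG, e, h, hwf, hcard, hlt, hadj with
  | 0, hkG, e, h, hwf, hcard, hlt, hadj =>
    obtain ⟨ℓ, -⟩ := h 0 (Nat.zero_le _)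
    exact ℓ.elim0
  | 1, hkG, e, h, hwf, hcard, hlt, hadj =>
    have hV : 0 < Fintype.card V := by
      by_contra hv
      have hc0 : Fintype.card V = 0 := by omega
      have hE : IsEmpty V := Fintype.card_eq_zero_iff.mp hc0
      have hb : Builds ([] : List (LcwOp (Fin 0))) G := by
        refine ⟨fun v => hE.elim v, fun op hop => absurd hop List.not_mem_nil,
          fun a => hE.elim a, ?_, fun v => hE.elim v, fun u => hE.elim u⟩
        simp [runLcw, LcwState.init, hc0]
      have h0 : lcw G ≤ 0 := Nat.sInf_le ⟨[], hb⟩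
      omega
    have hn0 : 0 < (runLcw e).n := by rw [hcard]; exact hV
    obtain ⟨m, hm⟩ := lab_of_lt e 0 hn0
    obtain ⟨ℓ, hℓ⟩ := h e.length le_rfl
    rw [List.take_length] at hℓ
    exact hℓ 0 (by rw [hm]; exact congrArg some (Subsingleton.elim m ℓ))
  | (k'' + 2), hkG, e, h, hwf, hcard, hlt, hadj =>
    obtain ⟨e', σ, hwf', inv⟩ := sim_all (k := k'' + 1) (Nat.succ_pos _) e hwf h
    have hb : Builds e' G := by
      refine ⟨f, hwf', hinjf, ?_, ?_, ?_⟩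
      · rw [inv.hn, hcard]
      · intro v; rw [inv.hn]; exact hlt v
      · intro u v; rw [inv.hadj]; exact hadj u v
    have hle : lcw G ≤ k'' + 1 := Nat.sInf_le ⟨e', hb⟩
    omega

/-- Proposition `lem-all-in-use`: in the process of building
`G` via any efficient lcw expression (one over exactly `lcw G` labels), there
is a point at which all `lcw G` labels are simultaneously in use. -/
theorem statement_3 {V : Type} [Fintype V] (G : SimpleGraph V)
    (e : List (LcwOp (Fin (lcw G)))) (he : Builds e G) :
    ∃ t ≤ e.length, ∀ ℓ : Fin (lcw G), ∃ v : ℕ,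
      (runLcw (e.take t)).lab v = some ℓ := by
  
  by_contra hcon
  push_neg at hcon
  exact key_false G (lcw G) rfl e he hcon
end

section
/- Fix an efficient lcw expression for a finite graph G and a label ℓ used in this expression. Then there is an lcw expression for G using the same set of labels in which the vertices are inserted in the same order and in which vertices labeled ℓ are never relabeled. -/
/-- Translate an expression through a running permutation `π` of labels,
swapping `ℓ` with the target whenever a relabel would move class `ℓ`. -/
def lcwTranslate {L : Type} [DecidableEq L] (ℓ : L) :
    Equiv.Perm L → List (LcwOp L) → List (LcwOp L)
  | _, [] => []
  | π, (.insert a) :: rest => .insert (π a) :: lcwTranslate ℓ π rest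
  | π, (.join i j) :: rest => .join (π i) (π j) :: lcwTranslate ℓ π rest
  | π, (.relabel i j) :: rest =>
      if π i = ℓ ∧ π j ≠ ℓ then
        .relabel (π j) ℓ :: lcwTranslate ℓ (Equiv.swap ℓ (π j) * π) rest
      else
        .relabel (π i) (π j) :: lcwTranslate ℓ π rest

lemma option_map_perm_eq {L : Type} (π : Equiv.Perm L) (o : Option L) (i : L) :
    o.map π = some (π i) ↔ o = some i := by
  cases o with
  | none => simp
  | some a => simp [π.injective.eq_iff]

lemma lcwTranslate_spec {L : Type} [DecidableEq L] (ℓ : L) :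
    ∀ (e : List (LcwOp L)) (π : Equiv.Perm L) (s s' : LcwState L),
      s'.n = s.n → (∀ u v, s'.adj u v ↔ s.adj u v) →
      (∀ v, s'.lab v = (s.lab v).map π) →
      ∃ π' : Equiv.Perm L,
        (List.foldl LcwState.step s' (lcwTranslate ℓ π e)).n
          = (List.foldl LcwState.step s e).n ∧
        (∀ u v, (List.foldl LcwState.step s' (lcwTranslate ℓ π e)).adj u v
          ↔ (List.foldl LcwState.step s e).adj u v) ∧
        (∀ v, (List.foldl LcwState.step s' (lcwTranslate ℓ π e)).lab v
          = ((List.foldl LcwState.step s e).lab v).map π') := by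
  intro e
  induction e with
  | nil => intro π s s' hn hadj hlab; exact ⟨π, hn, hadj, hlab⟩
  | cons op rest ih =>
    intro π s s' hn hadj hlab
    cases op with
    | insert a =>
        simp only [lcwTranslate, List.foldl_cons]
        apply ih π
        · simp [LcwState.step, hn]
        · intro u v; simpa [LcwState.step] using hadj u v
        · intro v
          simp only [LcwState.step, hn]
          by_cases h : v = s.n <;> simp [h, hlab]
    | join i j =>
        simp only [lcwTranslate, List.foldl_cons]
        apply ih π
        · simp [LcwState.step, hn]
        · intro u v
          simp only [LcwState.step]
          rw [hlab u, hlab v]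
          simp only [option_map_perm_eq]
          constructor
          · rintro (h | ⟨h1, h2⟩)
            · exact Or.inl ((hadj u v).1 h)
            · exact Or.inr ⟨h1, h2⟩
          · rintro (h | ⟨h1, h2⟩)
            · exact Or.inl ((hadj u v).2 h)
            · exact Or.inr ⟨h1, h2⟩
        · intro v; simpa [LcwState.step] using hlab v
    | relabel i j =>
        by_cases hc : π i = ℓ ∧ π j ≠ ℓ
        · simp only [lcwTranslate, if_pos hc, List.foldl_cons]
          apply ih (Equiv.swap ℓ (π j) * π)
          · simp [LcwState.step, hn]
          · intro u v; simpa [LcwState.step] using hadj u v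
          · intro v
            simp only [LcwState.step]
            rw [hlab v]
            rcases hv : s.lab v with _ | a
            · simp
            · simp only [Option.map_some, Option.some.injEq,
                Equiv.Perm.mul_apply]
              by_cases ha : a = j
              · subst ha
                simp [Equiv.swap_apply_right]
              · have hπa : π a ≠ π j := fun h => ha (π.injective h)
                rw [if_neg (by simpa using hπa)]
                by_cases ha' : a = i
                · subst ha'
                  simp [hc.1, Equiv.swap_apply_left]
                · rw [if_neg (by simpa using ha')]
                  have hπa' : π a ≠ ℓ := by
                    rw [← hc.1]; exact fun h => ha' (π.injective h)
                  simp [Equiv.swap_apply_of_ne_of_ne hπa' hπa]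
        · simp only [lcwTranslate, if_neg hc, List.foldl_cons]
          apply ih π
          · simp [LcwState.step, hn]
          · intro u v; simpa [LcwState.step] using hadj u v
          · intro v
            simp only [LcwState.step]
            rw [hlab v]
            rcases hv : s.lab v with _ | a
            · simp
            · by_cases ha : a = i
              · subst ha; simp
              · simp [ha, π.injective.eq_iff]

lemma lcwTranslate_props {L : Type} [DecidableEq L] (ℓ : L) :
    ∀ (e : List (LcwOp L)) (π : Equiv.Perm L), WfExpr e →
      WfExpr (lcwTranslate ℓ π e) ∧
      ∀ op ∈ lcwTranslate ℓ π e, ∀ j, op = LcwOp.relabel ℓ j → j = ℓ := by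
  intro e
  induction e with
  | nil =>
      intro π _
      constructor
      · intro op hop; simp [lcwTranslate] at hop
      · intro op hop; simp [lcwTranslate] at hop
  | cons op rest ih =>
    intro π hwf
    have hwf' : WfExpr rest := fun o ho => hwf o (List.mem_cons_of_mem _ ho)
    cases op with
    | insert a =>
        obtain ⟨h1, h2⟩ := ih π hwf'
        refine ⟨?_, ?_⟩
        · intro o ho i j hij
          rcases List.mem_cons.1 ho with h | h
          · subst h; simp at hij
          · exact h1 o h i j hij
        · intro o ho j hj
          rcases List.mem_cons.1 ho with h | h
          · subst h; simp at hj
          · exact h2 o h j hj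
    | join a b =>
        obtain ⟨h1, h2⟩ := ih π hwf'
        have hab : a ≠ b := hwf _ List.mem_cons_self a b rfl
        refine ⟨?_, ?_⟩
        · intro o ho i j hij
          rcases List.mem_cons.1 ho with h | h
          · subst h
            cases hij
            exact fun h => hab (π.injective h)
          · exact h1 o h i j hij
        · intro o ho j hj
          rcases List.mem_cons.1 ho with h | h
          · subst h; simp at hj
          · exact h2 o h j hj
    | relabel a b =>
        by_cases hc : π a = ℓ ∧ π b ≠ ℓ
        · obtain ⟨h1, h2⟩ := ih (Equiv.swap ℓ (π b) * π) hwf'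
          simp only [lcwTranslate, if_pos hc]
          refine ⟨?_, ?_⟩
          · intro o ho i j hij
            rcases List.mem_cons.1 ho with h | h
            · subst h; simp at hij
            · exact h1 o h i j hij
          · intro o ho j hj
            rcases List.mem_cons.1 ho with h | h
            · subst h
              cases hj
              exact absurd rfl hc.2
            · exact h2 o h j hj
        · obtain ⟨h1, h2⟩ := ih π hwf'
          simp only [lcwTranslate, if_neg hc]
          refine ⟨?_, ?_⟩
          · intro o ho i j hij
            rcases List.mem_cons.1 ho with h | h
            · subst h; simp at hij
            · exact h1 o h i j hij
          · intro o ho j hj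
            rcases List.mem_cons.1 ho with h | h
            · subst h
              cases hj
              by_contra hne
              exact hc ⟨rfl, hne⟩
            · exact h2 o h j hj

/-- Proposition `prop-label-order`: given an efficient lcw
expression for `G` (over exactly `lcw G` labels, building `G` with insertion
order recorded by `f`) and a label `ℓ` used in it, there is an lcw expression
over the same labels building `G` with the same insertion order (the same `f`)
in which vertices labeled `ℓ` are never relabeled. -/
theorem statement_4 {V : Type} [Fintype V] (G : SimpleGraph V)
    (e : List (LcwOp (Fin (lcw G)))) (f : V → ℕ) (he : BuildsVia e G f)
    (ℓ : Fin (lcw G))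
    (hused : ∃ t v, (runLcw (e.take t)).lab v = some ℓ) :
    ∃ e' : List (LcwOp (Fin (lcw G))), BuildsVia e' G f ∧
      ∀ op ∈ e', ∀ j, op = LcwOp.relabel ℓ j → j = ℓ := by
  obtain ⟨hwf, hinj, hcard, hlt, hadj⟩ := he
  obtain ⟨π', hn, hadj', _⟩ :=
    lcwTranslate_spec ℓ e 1 (LcwState.init _) (LcwState.init _) rfl
      (fun _ _ => Iff.rfl) (fun _ => rfl)
  obtain ⟨hwf', hsink⟩ := lcwTranslate_props ℓ e 1 hwf
  refine ⟨lcwTranslate ℓ 1 e, ⟨hwf', hinj, ?_, ?_, ?_⟩, hsink⟩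
  · unfold runLcw; rw [hn]; exact hcard
  · intro v
    unfold runLcw; rw [hn]; exact hlt v
  · intro u v
    exact (hadj u v).trans (hadj' (f u) (f v)).symm
end

section
/- Define a sequence of graphs by G₁ = K₂ and G_{k+1} = K1 ∗ ((G_k ∪ G_k) ∪ (G_k ∪ G_k)) for k ≥ 1, i.e., G_{k+1} is obtained by joining a single new vertex to the disjoint union of four copies of G_k. Then each G_k is a quasi-threshold graph and lcw(G_k) = k + 1 for all k ≥ 1. -/
/-! ### Auxiliary development for Statement 8 -/

section Statement8Aux

instance qtVDecEq : ∀ k : ℕ, DecidableEq (qtV k)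
  | 0 => inferInstanceAs (DecidableEq (Fin 2))
  | k + 1 =>
      letI := qtVDecEq k
      inferInstanceAs (DecidableEq (Unit ⊕ ((qtV k ⊕ qtV k) ⊕ (qtV k ⊕ qtV k))))

/-- The apex vertex of `qtV (k+1)`. -/
def qtApex (k : ℕ) : qtV (k + 1) := Sum.inl ()

/-- The four copy embeddings `qtV k → qtV (k+1)`. -/
def qtEmb (k : ℕ) : Fin 4 → qtV k → qtV (k + 1)
  | 0, v => Sum.inr (Sum.inl (Sum.inl v))
  | 1, v => Sum.inr (Sum.inl (Sum.inr v))
  | 2, v => Sum.inr (Sum.inr (Sum.inl v))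
  | 3, v => Sum.inr (Sum.inr (Sum.inr v))

lemma qtEmb_ne_apex (k : ℕ) (c : Fin 4) (v : qtV k) : qtEmb k c v ≠ qtApex k := by
  fin_cases c <;> simp [qtEmb, qtApex] <;> exact fun h => Sum.inr_ne_inl h

def qtUnpack (k : ℕ) : qtV (k + 1) → Option (Fin 4 × qtV k)
  | Sum.inl _ => none
  | Sum.inr (Sum.inl (Sum.inl v)) => some (0, v)
  | Sum.inr (Sum.inl (Sum.inr v)) => some (1, v)
  | Sum.inr (Sum.inr (Sum.inl v)) => some (2, v)
  | Sum.inr (Sum.inr (Sum.inr v)) => some (3, v)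

lemma qtUnpack_emb (k : ℕ) (c : Fin 4) (v : qtV k) :
    qtUnpack k (qtEmb k c v) = some (c, v) := by fin_cases c <;> rfl

lemma qtEmb_inj (k : ℕ) {c c' : Fin 4} {a b : qtV k}
    (h : qtEmb k c a = qtEmb k c' b) : c = c' ∧ a = b := by
  have h2 : qtUnpack k (qtEmb k c a) = qtUnpack k (qtEmb k c' b) := by rw [h]
  rw [qtUnpack_emb, qtUnpack_emb] at h2
  have := Option.some_injective _ h2
  exact ⟨congrArg Prod.fst this, congrArg Prod.snd this⟩

lemma qtV_cases (k : ℕ) (x : qtV (k + 1)) :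
    x = qtApex k ∨ ∃ c a, x = qtEmb k c a := by
  rcases x with u | ((a | a) | (a | a))
  · left; rfl
  · exact Or.inr ⟨0, a, rfl⟩
  · exact Or.inr ⟨1, a, rfl⟩
  · exact Or.inr ⟨2, a, rfl⟩
  · exact Or.inr ⟨3, a, rfl⟩

lemma qtG_zero : qtG 0 = (⊤ : SimpleGraph (Fin 2)) := rfl

lemma qtG_succ (k : ℕ) : qtG (k + 1) =
    GraphJoin (⊥ : SimpleGraph Unit)
      (GraphDisjUnion (GraphDisjUnion (qtG k) (qtG k)) (GraphDisjUnion (qtG k) (qtG k))) := rfl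

lemma graphJoin_adj {A B : Type} (G : SimpleGraph A) (H : SimpleGraph B) (x y : A ⊕ B) :
    (GraphJoin G H).Adj x y ↔ x ≠ y ∧ ¬ (GraphDisjUnion Gᶜ Hᶜ).Adj x y := by
  constructor
  · intro h; exact ⟨h.ne, h.2⟩
  · intro h; exact ⟨h.1, h.2⟩

lemma du_adj_inl_inr {A B : Type} (G : SimpleGraph A) (H : SimpleGraph B) (a : A) (b : B) :
    ¬ (GraphDisjUnion G H).Adj (Sum.inl a) (Sum.inr b) := fun h => h

lemma du_adj_inr_inl {A B : Type} (G : SimpleGraph A) (H : SimpleGraph B) (a : A) (b : B) :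
    ¬ (GraphDisjUnion G H).Adj (Sum.inr b) (Sum.inl a) := fun h => h

lemma du_adj_inr_inr {A B : Type} (G : SimpleGraph A) (H : SimpleGraph B) (a b : B) :
    (GraphDisjUnion G H).Adj (Sum.inr a) (Sum.inr b) ↔ H.Adj a b := Iff.rfl

lemma du_adj_inl_inl {A B : Type} (G : SimpleGraph A) (H : SimpleGraph B) (a b : A) :
    (GraphDisjUnion G H).Adj (Sum.inl a) (Sum.inl b) ↔ G.Adj a b := Iff.rfl

/-- The apex is adjacent to everything else. -/
lemma qtG_adj_apex (k : ℕ) (x : qtV (k + 1)) (hx : x ≠ qtApex k) :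
    (qtG (k + 1)).Adj (qtApex k) x := by
  rcases qtV_cases k x with h | ⟨c, a, rfl⟩
  · exact absurd h hx
  · rw [qtG_succ]; refine (graphJoin_adj _ _ _ _).mpr ?_
    constructor
    · intro h; exact (qtEmb_ne_apex k c a) h.symm
    · fin_cases c <;> exact du_adj_inl_inr _ _ _ _

lemma join_inr_inr {A B : Type} (G : SimpleGraph A) (H : SimpleGraph B) (a b : B) :
    (GraphJoin G H).Adj (Sum.inr a) (Sum.inr b) ↔ H.Adj a b := by
  rw [graphJoin_adj]
  constructor
  · rintro ⟨hne, hnd⟩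
    have hne' : a ≠ b := fun h => hne (by rw [h])
    by_contra hH
    exact hnd ((du_adj_inr_inr Gᶜ Hᶜ a b).mpr ((SimpleGraph.compl_adj _ _ _).mpr ⟨hne', hH⟩))
  · intro hH
    refine ⟨by simp [hH.ne], ?_⟩
    intro hc
    rw [du_adj_inr_inr] at hc
    exact ((SimpleGraph.compl_adj _ _ _).mp hc).2 hH

lemma qtG_adj_emb (k : ℕ) (c c' : Fin 4) (a b : qtV k) :
    (qtG (k + 1)).Adj (qtEmb k c a) (qtEmb k c' b) ↔ c = c' ∧ (qtG k).Adj a b := by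
  rw [qtG_succ]
  fin_cases c <;> fin_cases c' <;>
    simp only [qtEmb] <;>
    rw [join_inr_inr] <;>
    simp [du_adj_inl_inl, du_adj_inr_inr, du_adj_inl_inr, du_adj_inr_inl]


/-- Each `qtG k` has a dominating vertex. -/
lemma qtG_dom : ∀ k : ℕ, ∃ d : qtV k, ∀ x, x ≠ d → (qtG k).Adj d x := by
  intro k
  cases k with
  | zero =>
      refine ⟨(0 : Fin 2), fun x hx => ?_⟩
      rw [qtG_zero]
      exact (SimpleGraph.top_adj _ _).mpr (Ne.symm hx)
  | succ k =>
      exact ⟨qtApex k, fun x hx => qtG_adj_apex k x hx⟩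

lemma qtV_card_two_le : ∀ k : ℕ, 2 ≤ Fintype.card (qtV k) := by
  intro k
  cases k with
  | zero => show 2 ≤ Fintype.card (Fin 2); simp
  | succ k =>
      have h0 : Nonempty (qtV k) := by
        have h := qtV_card_two_le k
        have h1 : 0 < Fintype.card (qtV k) := by omega
        exact Fintype.card_pos_iff.mp h1
      obtain ⟨v⟩ := h0
      have : (qtApex k) ≠ (qtEmb k 0 v) := fun h => (qtEmb_ne_apex k 0 v) h.symm
      exact Fintype.one_lt_card_iff.mpr ⟨_, _, this⟩

lemma qtG_exists_nbr (k : ℕ) (x : qtV k) : ∃ w, (qtG k).Adj x w := by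
  obtain ⟨d, hd⟩ := qtG_dom k
  by_cases hx : x = d
  · subst hx
    have h2 := qtV_card_two_le k
    have h1 : 1 < Fintype.card (qtV k) := by omega
    obtain ⟨a, b, hab⟩ := Fintype.one_lt_card_iff.mp h1
    rcases eq_or_ne a x with rfl | ha
    · exact ⟨b, hd b (Ne.symm hab)⟩
    · exact ⟨a, hd a ha⟩
  · exact ⟨d, ((qtG k).adj_symm (hd x hx))⟩

/-- Any nontrivial cut of `qtG k` has a crossing edge. -/
lemma qtG_cut (k : ℕ) (P : qtV k → Prop) (hx : ∃ x, P x) (hy : ∃ y, ¬ P y) :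
    ∃ u v, (qtG k).Adj u v ∧ P u ∧ ¬ P v := by
  obtain ⟨d, hd⟩ := qtG_dom k
  obtain ⟨x, hxP⟩ := hx
  obtain ⟨y, hyP⟩ := hy
  by_cases hPd : P d
  · have hyd : y ≠ d := fun h => hyP (h ▸ hPd)
    exact ⟨d, y, hd y hyd, hPd, hyP⟩
  · have hxd : x ≠ d := fun h => hPd (h ▸ hxP)
    exact ⟨x, d, (qtG k).adj_symm (hd x hxd), hxP, hPd⟩

/-- No induced copy of a connected graph on 4 vertices with a non-neighbor for
every vertex sits inside any `qtG k`. -/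
lemma qtG_no_induced (H : SimpleGraph (Fin 4))
    (hnon : ∀ a : Fin 4, ∃ b, a ≠ b ∧ ¬ H.Adj a b)
    (hconn : ∀ c : Fin 4 → Fin 4, (∃ a b : Fin 4, c a ≠ c b) →
      ∃ a b : Fin 4, H.Adj a b ∧ c a ≠ c b) :
    ∀ k : ℕ, ¬ InducedSubgraphOf H (qtG k) := by
  intro k
  induction k with
  | zero =>
      rintro ⟨f, _⟩
      have := Fintype.card_le_of_injective f f.injective
      change 4 ≤ Fintype.card (Fin 2) at this
      simp at this
  | succ k ih =>
      rintro ⟨f, hf⟩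
      have hnoapex : ∀ a : Fin 4, f a ≠ qtApex k := by
        intro a ha
        obtain ⟨b, hab, hnadj⟩ := hnon a
        have hne : f b ≠ qtApex k := by
          rw [← ha]; exact fun h => hab (f.injective h.symm)
        have : (qtG (k + 1)).Adj (f a) (f b) := ha ▸ qtG_adj_apex k (f b) hne
        exact hnadj ((hf a b).mpr this)
      have hdec : ∀ a : Fin 4, ∃ c v, f a = qtEmb k c v := by
        intro a
        rcases qtV_cases k (f a) with h | ⟨c, v, h⟩
        · exact absurd h (hnoapex a)
        · exact ⟨c, v, h⟩
      choose c g hcg using hdec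
      have hcconst : ∀ a b : Fin 4, c a = c b := by
        by_contra hne
        push_neg at hne
        obtain ⟨a0, b0, hab0⟩ := hne
        obtain ⟨a, b, hadj, hcab⟩ := hconn c ⟨a0, b0, hab0⟩
        have : (qtG (k + 1)).Adj (f a) (f b) := (hf a b).mp hadj
        rw [hcg a, hcg b] at this
        exact hcab ((qtG_adj_emb k _ _ _ _).mp this).1
      have hginj : Function.Injective g := by
        intro a b hab
        apply f.injective
        rw [hcg a, hcg b, hab, hcconst a b]
      refine ih ⟨⟨g, hginj⟩, fun a b => ?_⟩
      have := hf a b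
      rw [hcg a, hcg b] at this
      rw [this, qtG_adj_emb]
      simp [hcconst a b]

instance pathP4_dec : DecidableRel pathP4.Adj := fun a b =>
  decidable_of_iff' _ (SimpleGraph.fromRel_adj _ a b)

instance cycleC4_dec : DecidableRel cycleC4.Adj := fun a b =>
  decidable_of_iff' _ (SimpleGraph.fromRel_adj _ a b)

set_option maxRecDepth 40000 in
lemma qtG_isQuasiThreshold (k : ℕ) : IsQuasiThreshold (qtG k) := by
  constructor
  · exact qtG_no_induced pathP4 (by decide) (by decide) k
  · exact qtG_no_induced cycleC4 (by decide) (by decide) k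


/-! #### Semantics of lcw expressions -/
set_option linter.unusedSectionVars false

variable {L : Type} [DecidableEq L]

/-- Run an expression from a given state. -/
def runFrom (s : LcwState L) (l : List (LcwOp L)) : LcwState L := l.foldl LcwState.step s

lemma runFrom_nil (s : LcwState L) : runFrom s [] = s := rfl

lemma runFrom_cons (s : LcwState L) (op : LcwOp L) (l : List (LcwOp L)) :
    runFrom s (op :: l) = runFrom (s.step op) l := rfl

lemma runFrom_append (s : LcwState L) (l₁ l₂ : List (LcwOp L)) :
    runFrom s (l₁ ++ l₂) = runFrom (runFrom s l₁) l₂ := by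
  simp [runFrom, List.foldl_append]

lemma runLcw_eq_runFrom (e : List (LcwOp L)) : runLcw e = runFrom (LcwState.init L) e := rfl

/-- Well-formedness invariants of reachable states. -/
structure StOk (s : LcwState L) : Prop where
  labSome : ∀ x, x < s.n → (s.lab x).isSome
  labNone : ∀ x, s.n ≤ x → s.lab x = none
  adjLt : ∀ x y, s.adj x y → x < s.n ∧ y < s.n

lemma StOk.init : StOk (LcwState.init L) := by
  constructor
  · intro x hx; simp [LcwState.init] at hx
  · intro x _; rfl
  · intro x y h; exact h.elim

lemma StOk.step {s : LcwState L} (hs : StOk s) (op : LcwOp L) : StOk (s.step op) := by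
  cases op with
  | insert a =>
      constructor
      · intro x hx
        simp only [LcwState.step] at hx ⊢
        by_cases h : x = s.n
        · simp [h]
        · simp only [if_neg h]
          exact hs.labSome x (by omega)
      · intro x hx
        simp only [LcwState.step] at hx ⊢
        rw [if_neg (by omega)]
        exact hs.labNone x (by omega)
      · intro x y h
        simp only [LcwState.step] at h ⊢
        have := hs.adjLt x y h
        omega
  | join i j =>
      constructor
      · intro x hx
        simp only [LcwState.step] at hx ⊢
        exact hs.labSome x hx
      · intro x hx
        simp only [LcwState.step] at hx ⊢
        exact hs.labNone x hx
      · intro x y h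
        simp only [LcwState.step] at h ⊢
        rcases h with h | ⟨_, h⟩
        · exact hs.adjLt x y h
        · have hx : (s.lab x).isSome := by rcases h with ⟨h1, _⟩ | ⟨h1, _⟩ <;> simp [h1]
          have hy : (s.lab y).isSome := by rcases h with ⟨_, h2⟩ | ⟨_, h2⟩ <;> simp [h2]
          constructor
          · by_contra hc
            rw [hs.labNone x (by omega)] at hx; simp at hx
          · by_contra hc
            rw [hs.labNone y (by omega)] at hy; simp at hy
  | relabel i j =>
      constructor
      · intro x hx
        simp only [LcwState.step] at hx ⊢
        by_cases h : s.lab x = some i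
        · simp [h]
        · simp only [if_neg h]
          exact hs.labSome x hx
      · intro x hx
        simp only [LcwState.step] at hx ⊢
        rw [hs.labNone x hx]
        simp
      · intro x y h
        simp only [LcwState.step] at h ⊢
        exact hs.adjLt x y h

lemma StOk.runFrom {s : LcwState L} (hs : StOk s) (l : List (LcwOp L)) :
    StOk (runFrom s l) := by
  induction l generalizing s with
  | nil => exact hs
  | cons op l ih => exact ih (hs.step op)

lemma StOk.runLcw (e : List (LcwOp L)) : StOk (runLcw e) :=
  StOk.init.runFrom e

lemma step_n_mono (s : LcwState L) (op : LcwOp L) : s.n ≤ (s.step op).n := by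
  cases op <;> simp [LcwState.step]

lemma runFrom_n_mono (s : LcwState L) (l : List (LcwOp L)) : s.n ≤ (runFrom s l).n := by
  induction l generalizing s with
  | nil => exact le_refl _
  | cons op l ih => exact le_trans (step_n_mono s op) (ih (s.step op))

lemma step_adj_mono {s : LcwState L} {x y : ℕ} (h : s.adj x y) (op : LcwOp L) :
    (s.step op).adj x y := by
  cases op with
  | insert a => exact h
  | join i j => exact Or.inl h
  | relabel i j => exact h

lemma runFrom_adj_mono {s : LcwState L} {x y : ℕ} (h : s.adj x y) (l : List (LcwOp L)) :
    (runFrom s l).adj x y := by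
  induction l generalizing s with
  | nil => exact h
  | cons op l ih => exact ih (step_adj_mono h op)

lemma step_labeq {s : LcwState L} {x y : ℕ} (hx : x < s.n) (hy : y < s.n)
    (h : s.lab x = s.lab y) (op : LcwOp L) : (s.step op).lab x = (s.step op).lab y := by
  cases op with
  | insert a =>
      simp only [LcwState.step]
      rw [if_neg (by omega), if_neg (by omega)]
      exact h
  | join i j => exact h
  | relabel i j =>
      simp only [LcwState.step]
      rw [h]
  
lemma runFrom_labeq {s : LcwState L} {x y : ℕ} (hx : x < s.n) (hy : y < s.n)
    (h : s.lab x = s.lab y) (l : List (LcwOp L)) :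
    (runFrom s l).lab x = (runFrom s l).lab y := by
  induction l generalizing s with
  | nil => exact h
  | cons op l ih =>
      exact ih (lt_of_lt_of_le hx (step_n_mono s op)) (lt_of_lt_of_le hy (step_n_mono s op))
        (step_labeq hx hy h op)

/-- Same-label vertices acquire the same new edges. -/
lemma twin_run {s : LcwState L} {x c w : ℕ} (l : List (LcwOp L))
    (hx : x < s.n) (hc : c < s.n) (heq : s.lab x = s.lab c) (hcw : c ≠ w)
    (hbase : s.adj x w → s.adj c w) :
    (runFrom s l).adj x w → (runFrom s l).adj c w := by
  induction l generalizing s with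
  | nil => exact hbase
  | cons op l ih =>
      refine ih (lt_of_lt_of_le hx (step_n_mono s op)) (lt_of_lt_of_le hc (step_n_mono s op))
        (step_labeq hx hc heq op) ?_
      cases op with
      | insert a => exact hbase
      | relabel i j => exact hbase
      | join i j =>
          rintro (h | ⟨hxw, hcond⟩)
          · exact Or.inl (hbase h)
          · refine Or.inr ⟨hcw, ?_⟩
            rw [heq] at hcond
            exact hcond

/-- Same-label non-adjacent vertices can never become adjacent (wf expressions). -/
lemma mutual_not_run {s : LcwState L} {x c : ℕ} (l : List (LcwOp L))
    (hwf : ∀ op ∈ l, ∀ i j : L, op = LcwOp.join i j → i ≠ j)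
    (hx : x < s.n) (hc : c < s.n) (heq : s.lab x = s.lab c) (hnadj : ¬ s.adj x c) :
    ¬ (runFrom s l).adj x c := by
  induction l generalizing s with
  | nil => exact hnadj
  | cons op l ih =>
      refine ih (fun op' h' => hwf op' (List.mem_cons_of_mem _ h'))
        (lt_of_lt_of_le hx (step_n_mono s op)) (lt_of_lt_of_le hc (step_n_mono s op))
        (step_labeq hx hc heq op) ?_
      cases op with
      | insert a => exact hnadj
      | relabel i j => exact hnadj
      | join i j =>
          have hij : i ≠ j := hwf _ List.mem_cons_self i j rfl
          rintro (h | ⟨hne, hcond⟩)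
          · exact hnadj h
          · rw [heq] at hcond
            rcases hcond with ⟨h1, h2⟩ | ⟨h1, h2⟩ <;>
              rw [h1] at h2 <;> injection h2 with h3 <;>
              first | exact hij h3 | exact hij h3.symm

/-- The expression can be split at its `(i+1)`-st insert operation. -/
lemma split_at_insert (l : List (LcwOp L)) :
    ∀ (s : LcwState L) (i : ℕ), s.n ≤ i → i < (runFrom s l).n →
    ∃ l₁ a l₂, l = l₁ ++ LcwOp.insert a :: l₂ ∧ (runFrom s l₁).n = i := by
  induction l with
  | nil =>
      intro s i h1 h2
      rw [runFrom_nil] at h2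
      omega
  | cons op l ih =>
      intro s i h1 h2
      rw [runFrom_cons] at h2
      cases op with
      | insert a =>
          by_cases h : s.n = i
          · exact ⟨[], a, l, rfl, h⟩
          · have hlt : (s.step (LcwOp.insert a)).n ≤ i := by
              simp only [LcwState.step]; omega
            obtain ⟨l₁, a', l₂, hsplit, hn⟩ := ih _ i hlt h2
            exact ⟨LcwOp.insert a :: l₁, a', l₂, by rw [hsplit]; rfl, hn⟩
      | join i' j' =>
          have hlt : (s.step (LcwOp.join i' j')).n ≤ i := h1
          obtain ⟨l₁, a', l₂, hsplit, hn⟩ := ih _ i hlt h2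
          exact ⟨LcwOp.join i' j' :: l₁, a', l₂, by rw [hsplit]; rfl, hn⟩
      | relabel i' j' =>
          have hlt : (s.step (LcwOp.relabel i' j')).n ≤ i := h1
          obtain ⟨l₁, a', l₂, hsplit, hn⟩ := ih _ i hlt h2
          exact ⟨LcwOp.relabel i' j' :: l₁, a', l₂, by rw [hsplit]; rfl, hn⟩

/-- At the state just after the insert of vertex `i`, vertices `x` and `y`
carry distinct labels. -/
def LabNe (e : List (LcwOp L)) (i x y : ℕ) : Prop :=
  ∀ l₁ a l₂, e = l₁ ++ LcwOp.insert a :: l₂ → (runLcw l₁).n = i →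
    ((runLcw l₁).step (LcwOp.insert a)).lab x ≠ ((runLcw l₁).step (LcwOp.insert a)).lab y

lemma LabNe.symm {e : List (LcwOp L)} {i x y : ℕ} (h : LabNe e i x y) : LabNe e i y x :=
  fun l₁ a l₂ he hn => (h l₁ a l₂ he hn).symm

section Rules

variable {V : Type} [Fintype V] {e : List (LcwOp L)} {G : SimpleGraph V} {f : V → ℕ}

lemma mid_facts (hb : BuildsVia e G f) {l₁ : List (LcwOp L)} {a : L} {l₂ : List (LcwOp L)}
    (he : e = l₁ ++ LcwOp.insert a :: l₂) (i : ℕ) (hn : (runLcw l₁).n = i) :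
    ((runLcw l₁).step (LcwOp.insert a)).n = i + 1 ∧
    (∀ x y, ((runLcw l₁).step (LcwOp.insert a)).adj x y → x < i ∧ y < i) ∧
    runLcw e = runFrom ((runLcw l₁).step (LcwOp.insert a)) l₂ ∧
    (∀ op ∈ l₂, ∀ i' j' : L, op = LcwOp.join i' j' → i' ≠ j') := by
  refine ⟨by simp only [LcwState.step]; omega, ?_, ?_, ?_⟩
  · intro x y h
    have : (runLcw l₁).adj x y := h
    have := (StOk.runLcw l₁).adjLt x y this
    omega
  · rw [he, runLcw_eq_runFrom, runFrom_append, runFrom_cons]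
    rfl
  · intro op hop i' j' hopeq
    exact hb.1 op (by rw [he]; exact List.mem_append_right _ (List.mem_cons_of_mem _ hop)) i' j' hopeq

/-- Rule W: a pending edge to a not-yet-inserted (or just inserted) witness
separates labels. -/
lemma ruleW (hb : BuildsVia e G f) (hinj : Function.Injective f)
    {u v w : V} {i : ℕ} (huw : G.Adj u w) (hvw : ¬ G.Adj v w) (hvwne : v ≠ w)
    (hw : i ≤ f w) (hu : f u ≤ i) (hv : f v ≤ i) : LabNe e i (f u) (f v) := by
  intro l₁ a l₂ he hn heq
  obtain ⟨hsn, hadj, hrun, hwf⟩ := mid_facts hb he i hn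
  set s := (runLcw l₁).step (LcwOp.insert a) with hs
  have hfin : (runFrom s l₂).adj (f u) (f w) := by
    rw [← hrun]
    exact ((hb.2.2.2.2 u w).mp huw)
  have h2 : (runFrom s l₂).adj (f v) (f w) := by
    refine twin_run l₂ (by omega) (by omega) heq (fun hc => hinj.ne hvwne hc) ?_ hfin
    intro hadj'
    exact absurd ((hadj _ _ hadj').2) (by omega)
  exact hvw ((hb.2.2.2.2 v w).mpr (by rw [hrun]; exact h2))

/-- Rule P: the just-inserted vertex `v` (at position `i = f v`) is separated
from `u` by any neighbor of `v` that is not a neighbor of `u`. -/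
lemma ruleP (hb : BuildsVia e G f) (hinj : Function.Injective f)
    {u v w : V} (hvw : G.Adj v w) (huw : ¬ G.Adj u w) (huwne : u ≠ w)
    (hu : f u ≤ f v) : LabNe e (f v) (f u) (f v) := by
  intro l₁ a l₂ he hn heq
  obtain ⟨hsn, hadj, hrun, hwf⟩ := mid_facts hb he (f v) hn
  set s := (runLcw l₁).step (LcwOp.insert a) with hs
  have hfin : (runFrom s l₂).adj (f v) (f w) := by
    rw [← hrun]
    exact ((hb.2.2.2.2 v w).mp hvw)
  have h2 : (runFrom s l₂).adj (f u) (f w) := by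
    refine twin_run l₂ (by omega) (by omega) heq.symm (fun hc => hinj.ne huwne hc) ?_ hfin
    intro hadj'
    exact absurd ((hadj _ _ hadj').1) (by omega)
  exact huw ((hb.2.2.2.2 u w).mpr (by rw [hrun]; exact h2))

/-- Rule M: a pending mutual edge separates labels. -/
lemma ruleM (hb : BuildsVia e G f)
    {u v : V} (huv : G.Adj u v) (hu : f u ≤ f v) : LabNe e (f v) (f u) (f v) := by
  intro l₁ a l₂ he hn heq
  obtain ⟨hsn, hadj, hrun, hwf⟩ := mid_facts hb he (f v) hn
  set s := (runLcw l₁).step (LcwOp.insert a) with hs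
  refine mutual_not_run l₂ hwf (x := f u) (c := f v) (by omega) (by omega) heq ?_ ?_
  · intro hadj'
    exact absurd ((hadj _ _ hadj').2) (by omega)
  · rw [← hrun]
    exact ((hb.2.2.2.2 u v).mp huv)

end Rules


/-! #### The combinatorial lower bound -/

section Comb

variable {V : Type} [Fintype V]

theorem comb_main {e : List (LcwOp L)} {G : SimpleGraph V} {f : V → ℕ}
    (hb : BuildsVia e G f) :
    ∀ (m : ℕ) (ι : qtV m → V), Function.Injective ι →
    (∀ a b : qtV m, (qtG m).Adj a b ↔ G.Adj (ι a) (ι b)) →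
    ∃ (y : qtV m) (Z : Finset (qtV m)),
      Z.card = m + 2 ∧
      (∀ z ∈ Z, f (ι z) ≤ f (ι y)) ∧
      (∀ z ∈ Z, z = y ∨ (qtG m).Adj z y ∨ ∃ w, (qtG m).Adj z w ∧ f (ι y) < f (ι w)) ∧
      (∀ z₁ ∈ Z, ∀ z₂ ∈ Z, z₁ ≠ z₂ → LabNe e (f (ι y)) (f (ι z₁)) (f (ι z₂))) := by
  have hfinj : Function.Injective f := hb.2.1
  intro m
  induction m with
  | zero =>
      intro ι hι hadj
      have main : ∀ aa bb : qtV 0, aa ≠ bb → f (ι aa) ≤ f (ι bb) →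
          ∃ (y : qtV 0) (Z : Finset (qtV 0)),
            Z.card = 0 + 2 ∧
            (∀ z ∈ Z, f (ι z) ≤ f (ι y)) ∧
            (∀ z ∈ Z, z = y ∨ (qtG 0).Adj z y ∨ ∃ w, (qtG 0).Adj z w ∧ f (ι y) < f (ι w)) ∧
            (∀ z₁ ∈ Z, ∀ z₂ ∈ Z, z₁ ≠ z₂ → LabNe e (f (ι y)) (f (ι z₁)) (f (ι z₂))) := by
        intro aa bb hne hle
        have hadjab : (qtG 0).Adj aa bb := by
          rw [qtG_zero]
          exact (SimpleGraph.top_adj _ _).mpr hne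
        have hG : G.Adj (ι aa) (ι bb) := (hadj aa bb).mp hadjab
        refine ⟨bb, {aa, bb}, ?_, ?_, ?_, ?_⟩
        · rw [Finset.card_insert_of_notMem (by simp [hne]), Finset.card_singleton]
        · intro z hz
          rcases Finset.mem_insert.mp hz with rfl | hz
          · exact hle
          · exact le_of_eq (congrArg (fun t => f (ι t)) (Finset.mem_singleton.mp hz))
        · intro z hz
          rcases Finset.mem_insert.mp hz with rfl | hz
          · exact Or.inr (Or.inl hadjab)
          · exact Or.inl (Finset.mem_singleton.mp hz)
        · intro z₁ hz₁ z₂ hz₂ hne12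
          have h1 := Finset.mem_insert.mp hz₁
          have h2 := Finset.mem_insert.mp hz₂
          rw [Finset.mem_singleton] at h1 h2
          rcases h1 with rfl | rfl <;> rcases h2 with rfl | rfl
          · exact absurd rfl hne12
          · exact ruleM hb hG hle
          · exact (ruleM hb hG hle).symm
          · exact absurd rfl hne12
      have h01 : ((0 : Fin 2) : qtV 0) ≠ ((1 : Fin 2) : qtV 0) := by
        have : (0 : Fin 2) ≠ (1 : Fin 2) := by decide
        exact this
      rcases le_total (f (ι ((0 : Fin 2) : qtV 0))) (f (ι ((1 : Fin 2) : qtV 0))) with h | h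
      · exact main _ _ h01 h
      · exact main _ _ (Ne.symm h01) h
  | succ m ih =>
      intro ι hι hadj
      have hιc : ∀ c : Fin 4, Function.Injective (fun v => ι (qtEmb m c v)) := by
        intro c a b h
        exact (qtEmb_inj m (hι h)).2
      have hadjc : ∀ (c : Fin 4) (a b : qtV m),
          (qtG m).Adj a b ↔ G.Adj (ι (qtEmb m c a)) (ι (qtEmb m c b)) := by
        intro c a b
        rw [← hadj, qtG_adj_emb]
        simp
      have Yc := fun c : Fin 4 => ih (fun v => ι (qtEmb m c v)) (hιc c) (hadjc c)
      choose y Z hcard hbound hlive hpair using Yc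
      set I : Fin 4 → ℕ := fun c => f (ι (qtEmb m c (y c))) with hI
      have hIinj : Function.Injective I := by
        intro c c' h
        have h' : f (ι (qtEmb m c (y c))) = f (ι (qtEmb m c' (y c'))) := h
        exact (qtEmb_inj m (hι (hfinj h'))).1
      obtain ⟨cmin, -, hmin⟩ := Finset.exists_min_image Finset.univ I ⟨0, Finset.mem_univ 0⟩
      obtain ⟨cmax, -, hmax⟩ := Finset.exists_max_image Finset.univ I ⟨0, Finset.mem_univ 0⟩
      have hminmax : cmin ≠ cmax := by
        intro h
        have h01 : I 0 = I 1 := by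
          have l0 := hmin 0 (Finset.mem_univ 0)
          have l1 := hmin 1 (Finset.mem_univ 1)
          have u0 := hmax 0 (Finset.mem_univ 0)
          have u1 := hmax 1 (Finset.mem_univ 1)
          rw [← h] at u0 u1
          omega
        have : (0 : Fin 4) = 1 := hIinj h01
        exact absurd this (by decide)
      have hexj : ∀ u v : Fin 4, u ≠ v → ∃ j : Fin 4, j ≠ u ∧ j ≠ v := by decide
      obtain ⟨j, hjmin, hjmax⟩ := hexj cmin cmax hminmax
      set i := f (ι (qtEmb m j (y j))) with hi
      have hiIj : I j = i := rfl
      have hcross : ∀ (c c' : Fin 4), c ≠ c' → ∀ (a b : qtV m),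
          ¬ G.Adj (ι (qtEmb m c a)) (ι (qtEmb m c' b)) := by
        intro c c' hcc a b hGadj
        rw [← hadj, qtG_adj_emb] at hGadj
        exact hcc hGadj.1
      have hembne : ∀ (c c' : Fin 4), c ≠ c' → ∀ (a b : qtV m),
          ι (qtEmb m c a) ≠ ι (qtEmb m c' b) := by
        intro c c' hcc a b h
        exact hcc (qtEmb_inj m (hι h)).1
      have hapexadj : ∀ (c : Fin 4) (a : qtV m),
          G.Adj (ι (qtApex m)) (ι (qtEmb m c a)) := by
        intro c a
        rw [← hadj]
        exact qtG_adj_apex m _ (qtEmb_ne_apex m c a)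
      have hapexne : ∀ (c : Fin 4) (a : qtV m), ι (qtApex m) ≠ ι (qtEmb m c a) := by
        intro c a h
        exact (qtEmb_ne_apex m c a) (hι h).symm
      -- a sibling vertex inserted by time `i` is label-distinct from all members
      have sub1 : ∀ (c : Fin 4), c ≠ j → ∀ (zc : qtV m), f (ι (qtEmb m c zc)) ≤ i →
          ∀ zz ∈ Z j, LabNe e i (f (ι (qtEmb m c zc))) (f (ι (qtEmb m j zz))) := by
        intro c hc zc hzc zz hzz
        rcases hlive j zz hzz with rfl | hA | ⟨w, hw, hfw⟩
        · obtain ⟨wn, hwn⟩ := qtG_exists_nbr m (y j)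
          exact ruleP hb hfinj ((hadjc j _ _).mp hwn) (hcross c j hc zc wn)
            (hembne c j hc zc wn) hzc
        · exact (ruleW hb hfinj ((hadjc j _ _).mp hA) (hcross c j hc zc (y j))
            (hembne c j hc zc (y j)) (le_refl i) (hbound j zz hzz) hzc).symm
        · exact (ruleW hb hfinj ((hadjc j _ _).mp hw) (hcross c j hc zc w)
            (hembne c j hc zc w) (le_of_lt hfw) (hbound j zz hzz) hzc).symm
      -- generic construction of the conclusion from an extra vertex
      have build : ∀ (extra : qtV (m + 1)),
          (∀ zz : qtV m, extra ≠ qtEmb m j zz) →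
          f (ι extra) ≤ i →
          (∃ w : qtV (m + 1), (qtG (m + 1)).Adj extra w ∧ i < f (ι w)) →
          (∀ zz ∈ Z j, LabNe e i (f (ι extra)) (f (ι (qtEmb m j zz)))) →
          ∃ (y' : qtV (m + 1)) (Z' : Finset (qtV (m + 1))),
            Z'.card = m + 1 + 2 ∧
            (∀ z ∈ Z', f (ι z) ≤ f (ι y')) ∧
            (∀ z ∈ Z', z = y' ∨ (qtG (m + 1)).Adj z y' ∨
              ∃ w, (qtG (m + 1)).Adj z w ∧ f (ι y') < f (ι w)) ∧
            (∀ z₁ ∈ Z', ∀ z₂ ∈ Z', z₁ ≠ z₂ →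
              LabNe e (f (ι y')) (f (ι z₁)) (f (ι z₂))) := by
        intro extra hne hle hliveX hpairX
        have hembinj : Function.Injective (qtEmb m j) := by
          intro a b h
          exact (qtEmb_inj m h).2
        have hnomem : extra ∉ (Z j).image (qtEmb m j) := by
          intro hmem
          obtain ⟨zz, -, hzz⟩ := Finset.mem_image.mp hmem
          exact hne zz hzz.symm
        refine ⟨qtEmb m j (y j), insert extra ((Z j).image (qtEmb m j)), ?_, ?_, ?_, ?_⟩
        · rw [Finset.card_insert_of_notMem hnomem,
            Finset.card_image_of_injective _ hembinj, hcard j]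
        · intro z hz
          rcases Finset.mem_insert.mp hz with rfl | hz
          · exact hle
          · obtain ⟨zz, hzzZ, rfl⟩ := Finset.mem_image.mp hz
            exact hbound j zz hzzZ
        · intro z hz
          rcases Finset.mem_insert.mp hz with rfl | hz
          · exact Or.inr (Or.inr hliveX)
          · obtain ⟨zz, hzzZ, rfl⟩ := Finset.mem_image.mp hz
            rcases hlive j zz hzzZ with rfl | hA | ⟨w, hw1, hw2⟩
            · exact Or.inl rfl
            · exact Or.inr (Or.inl ((qtG_adj_emb m j j zz (y j)).mpr ⟨rfl, hA⟩))
            · exact Or.inr (Or.inr ⟨qtEmb m j w,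
                (qtG_adj_emb m j j zz w).mpr ⟨rfl, hw1⟩, hw2⟩)
        · intro z₁ hz₁ z₂ hz₂ hne12
          have h1 := Finset.mem_insert.mp hz₁
          have h2 := Finset.mem_insert.mp hz₂
          rcases h1 with h1 | h1
          · rcases h2 with h2 | h2
            · exact absurd (h1.trans h2.symm) hne12
            · obtain ⟨zz, hzzZ, hzzeq⟩ := Finset.mem_image.mp h2
              rw [h1, ← hzzeq]
              exact hpairX zz hzzZ
          · rcases h2 with h2 | h2
            · obtain ⟨zz, hzzZ, hzzeq⟩ := Finset.mem_image.mp h1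
              rw [h2, ← hzzeq]
              exact (hpairX zz hzzZ).symm
            · obtain ⟨zz₁, hzz₁, hzz₁eq⟩ := Finset.mem_image.mp h1
              obtain ⟨zz₂, hzz₂, hzz₂eq⟩ := Finset.mem_image.mp h2
              rw [← hzz₁eq, ← hzz₂eq]
              refine hpair j zz₁ hzz₁ zz₂ hzz₂ ?_
              intro h
              exact hne12 (by rw [← hzz₁eq, ← hzz₂eq, h])
      by_cases hA : ∃ (c : Fin 4), c ≠ j ∧ ∃ (z v : qtV m),
          (qtG m).Adj z v ∧ f (ι (qtEmb m c z)) ≤ i ∧ i < f (ι (qtEmb m c v))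
      · obtain ⟨c, hcj, z, v, hzv, hz, hv⟩ := hA
        refine build (qtEmb m c z) ?_ hz ?_ (sub1 c hcj z hz)
        · intro zz h
          exact hcj (qtEmb_inj m h).1
        · exact ⟨qtEmb m c v, (qtG_adj_emb m c c z v).mpr ⟨rfl, hzv⟩, hv⟩
      · by_cases hP : i < f (ι (qtApex m))
        · -- apex not yet inserted: all sibling vertices are live
          refine build (qtEmb m cmin (y cmin)) ?_ (hmin j (Finset.mem_univ j)) ?_
            (sub1 cmin (fun h => hjmin h.symm) (y cmin) (hmin j (Finset.mem_univ j)))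
          · intro zz h
            exact hjmin ((qtEmb_inj m h).1).symm
          · refine ⟨qtApex m, ?_, hP⟩
            exact (qtG (m + 1)).adj_symm
              (qtG_adj_apex m _ (qtEmb_ne_apex m cmin (y cmin)))
        · push_neg at hP
          -- copy `cmax` lies entirely in the future
          have hjltmax : i < I cmax := by
            have h1 := hmax j (Finset.mem_univ j)
            rcases lt_or_eq_of_le h1 with h | h
            · exact h
            · exact absurd (hIinj h) hjmax
          have hcmaxup : ∀ v : qtV m, i < f (ι (qtEmb m cmax v)) := by
            by_contra hcon
            push_neg at hcon
            obtain ⟨w0, hw0⟩ := hcon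
            obtain ⟨u', v', huv, hu', hv'⟩ := qtG_cut m
              (fun v => f (ι (qtEmb m cmax v)) ≤ i) ⟨w0, hw0⟩
              ⟨y cmax, by simp only [not_le]; exact hjltmax⟩
            exact hA ⟨cmax, fun h => hjmax h.symm, u', v', huv, hu', not_le.mp hv'⟩
          refine build (qtApex m) (fun zz h => (qtEmb_ne_apex m j zz) h.symm) hP
            ⟨qtEmb m cmax (y cmax),
              qtG_adj_apex m _ (qtEmb_ne_apex m cmax (y cmax)), hjltmax⟩ ?_
          intro zz hzz
          by_cases hzy : zz = y j
          · subst hzy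
            exact ruleM hb (hapexadj j (y j)) hP
          · by_cases hadjzy : (qtG m).Adj zz (y j)
            · exact ruleW hb hfinj (hapexadj cmax (y cmax))
                (hcross j cmax hjmax zz (y cmax))
                (hembne j cmax hjmax zz (y cmax))
                (le_of_lt hjltmax) hP (hbound j zz hzz)
            · have hnadj : ¬ G.Adj (ι (qtEmb m j zz)) (ι (qtEmb m j (y j))) := by
                rw [← hadjc j]
                exact hadjzy
              have hnee : ι (qtEmb m j zz) ≠ ι (qtEmb m j (y j)) := by
                intro h
                exact hzy (qtEmb_inj m (hι h)).2
              exact ruleW hb hfinj (hapexadj j (y j)) hnadj hnee (le_refl i) hP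
                (hbound j zz hzz)

end Comb


lemma qtG_lower (k q : ℕ) (e : List (LcwOp (Fin q))) (h : Builds e (qtG k)) :
    k + 2 ≤ q := by
  obtain ⟨f, hb⟩ := h
  obtain ⟨y, Z, hcard, hbound, -, hpair⟩ :=
    comb_main hb k id Function.injective_id (fun a b => Iff.rfl)
  simp only [id_eq] at hbound hpair
  have hfy : f y < (runLcw e).n := hb.2.2.2.1 y
  obtain ⟨l₁, a, l₂, hsplit, hn⟩ := split_at_insert e (LcwState.init (Fin q)) (f y)
    (by simp [LcwState.init]) (by rw [← runLcw_eq_runFrom]; exact hfy)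
  have hn' : (runLcw l₁).n = f y := hn
  have hOk : StOk ((runLcw l₁).step (LcwOp.insert a)) := (StOk.runLcw l₁).step _
  have hsn : ((runLcw l₁).step (LcwOp.insert a)).n = f y + 1 := by
    simp only [LcwState.step]
    omega
  have hsome : ∀ z ∈ Z, ∃ ℓ : Fin q,
      ((runLcw l₁).step (LcwOp.insert a)).lab (f z) = some ℓ := by
    intro z hz
    have h1 : f z < ((runLcw l₁).step (LcwOp.insert a)).n := by
      rw [hsn]
      have := hbound z hz
      omega
    exact Option.isSome_iff_exists.mp (hOk.labSome _ h1)
  obtain ⟨z₀, hz₀⟩ := Finset.card_pos.mp (by rw [hcard]; omega)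
  obtain ⟨d, -⟩ := hsome z₀ hz₀
  have hinj : Set.InjOn (fun z => (((runLcw l₁).step (LcwOp.insert a)).lab (f z)).getD d)
      (Z : Set (qtV k)) := by
    intro z₁ hz₁ z₂ hz₂ hgz
    by_contra hne
    have hlne := hpair z₁ (Finset.mem_coe.mp hz₁) z₂ (Finset.mem_coe.mp hz₂) hne
      l₁ a l₂ hsplit hn'
    obtain ⟨ℓ₁, h1⟩ := hsome z₁ (Finset.mem_coe.mp hz₁)
    obtain ⟨ℓ₂, h2⟩ := hsome z₂ (Finset.mem_coe.mp hz₂)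
    rw [h1, h2] at hlne
    simp only [h1, h2, Option.getD_some] at hgz
    exact hlne (by rw [hgz])
  have hle := Finset.card_le_card_of_injOn _ (fun z _ => Finset.mem_univ _) hinj
  rw [hcard, Finset.card_univ, Fintype.card_fin] at hle
  exact hle


/-! #### Upper bound: an explicit expression building `qtG k` -/

/-- Functorial action on operations. -/
def LcwOp.mapL {L L' : Type} (φ : L → L') : LcwOp L → LcwOp L'
  | .insert a => .insert (φ a)
  | .join i j => .join (φ i) (φ j)
  | .relabel i j => .relabel (φ i) (φ j)

lemma LcwOp.mapL_mapL {L L' L'' : Type} (φ : L' → L'') (ψ : L → L') (op : LcwOp L) :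
    LcwOp.mapL φ (LcwOp.mapL ψ op) = LcwOp.mapL (φ ∘ ψ) op := by
  cases op <;> rfl

lemma LcwOp.mapL_id {L : Type} (op : LcwOp L) : LcwOp.mapL id op = op := by
  cases op <;> rfl

/-- Number of vertices of `qtG k`. -/
def qtN (k : ℕ) : ℕ := Fintype.card (qtV k)

lemma qtN_zero : qtN 0 = 2 := by
  show Fintype.card (Fin 2) = 2
  simp

lemma qtN_succ (k : ℕ) : qtN (k + 1) = 4 * qtN k + 1 := by
  show Fintype.card (Unit ⊕ ((qtV k ⊕ qtV k) ⊕ (qtV k ⊕ qtV k))) = 4 * Fintype.card (qtV k) + 1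
  simp [Fintype.card_sum]
  ring

/-- Insertion index of each vertex. -/
def qtIdx : ∀ k : ℕ, qtV k → ℕ
  | 0, v => Fin.val v
  | k + 1, Sum.inl _ => 4 * qtN k
  | k + 1, Sum.inr (Sum.inl (Sum.inl v)) => qtIdx k v
  | k + 1, Sum.inr (Sum.inl (Sum.inr v)) => qtN k + qtIdx k v
  | k + 1, Sum.inr (Sum.inr (Sum.inl v)) => 2 * qtN k + qtIdx k v
  | k + 1, Sum.inr (Sum.inr (Sum.inr v)) => 3 * qtN k + qtIdx k v

lemma qtIdx_apex (k : ℕ) : qtIdx (k + 1) (qtApex k) = 4 * qtN k := rfl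

lemma qtIdx_emb (k : ℕ) (c : Fin 4) (a : qtV k) :
    qtIdx (k + 1) (qtEmb k c a) = (c : ℕ) * qtN k + qtIdx k a := by
  fin_cases c <;> simp [qtEmb, qtIdx] <;> ring

lemma qtIdx_lt : ∀ (k : ℕ) (v : qtV k), qtIdx k v < qtN k := by
  intro k
  induction k with
  | zero =>
      intro v
      rw [qtN_zero]
      exact (v : Fin 2).isLt
  | succ k ih =>
      intro v
      rcases qtV_cases k v with rfl | ⟨c, a, rfl⟩
      · rw [qtIdx_apex, qtN_succ]; omega
      · rw [qtIdx_emb, qtN_succ]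
        have h1 := ih a
        have h2 : (c : ℕ) ≤ 3 := Fin.is_le c
        have h3 : (c : ℕ) * qtN k ≤ 3 * qtN k := Nat.mul_le_mul_right _ h2
        omega

lemma qtIdx_inj : ∀ (k : ℕ), Function.Injective (qtIdx k) := by
  intro k
  induction k with
  | zero =>
      intro x y h
      exact Fin.val_injective h
  | succ k ih =>
      intro x y h
      rcases qtV_cases k x with rfl | ⟨c, a, rfl⟩ <;> rcases qtV_cases k y with rfl | ⟨c', a', rfl⟩
      · rfl
      · exfalso
        rw [qtIdx_apex, qtIdx_emb] at h
        have h1 := qtIdx_lt k a'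
        have h2 : (c' : ℕ) ≤ 3 := Fin.is_le c'
        have h3 : (c' : ℕ) * qtN k ≤ 3 * qtN k := Nat.mul_le_mul_right _ h2
        omega
      · exfalso
        rw [qtIdx_apex, qtIdx_emb] at h
        have h1 := qtIdx_lt k a
        have h2 : (c : ℕ) ≤ 3 := Fin.is_le c
        have h3 : (c : ℕ) * qtN k ≤ 3 * qtN k := Nat.mul_le_mul_right _ h2
        omega
      · rw [qtIdx_emb, qtIdx_emb] at h
        have h1 := qtIdx_lt k a
        have h2 := qtIdx_lt k a'
        have key : ∀ u u' w w' : ℕ, w < qtN k → w' < qtN k → u < u' →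
            u * qtN k + w ≠ u' * qtN k + w' := by
          intro u u' w w' hw hw' huu heq
          have hstep : u * qtN k + qtN k ≤ u' * qtN k := by
            calc u * qtN k + qtN k = (u + 1) * qtN k := by ring
            _ ≤ u' * qtN k := Nat.mul_le_mul_right _ huu
          omega
        have hcc' : (c : ℕ) = (c' : ℕ) := by
          rcases Nat.lt_trichotomy (c : ℕ) (c' : ℕ) with hlt | heq | hgt
          · exact absurd h (key _ _ _ _ h1 h2 hlt)
          · exact heq
          · exact absurd h.symm (key _ _ _ _ h2 h1 hgt)
        have hc : c = c' := Fin.ext hcc'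
        subst hc
        have hidx : qtIdx k a = qtIdx k a' := by omega
        rw [ih hidx]

/-- The parking segment: relabel everything in the image of `castSucc` to `last`. -/
def parkOps (k : ℕ) : List (LcwOp (Fin (k + 3))) :=
  (List.finRange (k + 2)).map fun l => LcwOp.relabel l.castSucc (Fin.last (k + 2))

/-- The expression building `qtG k` over `k+2` labels. -/
def qtE : ∀ k : ℕ, List (LcwOp (Fin (k + 2)))
  | 0 => [.insert 0, .insert 1, .join 0 1]
  | k + 1 =>
      ((qtE k).map (LcwOp.mapL Fin.castSucc) ++ parkOps k) ++
      ((qtE k).map (LcwOp.mapL Fin.castSucc) ++ parkOps k) ++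
      ((qtE k).map (LcwOp.mapL Fin.castSucc) ++ parkOps k) ++
      ((qtE k).map (LcwOp.mapL Fin.castSucc) ++ parkOps k) ++
      [.insert 0, .join 0 (Fin.last (k + 2))]

/-- Running a list of relabel operations. -/
lemma relabels_spec {L' : Type} [DecidableEq L'] {q : ℕ} (ρ : Fin q → L') (τ : L')
    (hτ : ∀ l, τ ≠ ρ l) :
    ∀ (ls : List (Fin q)) (s : LcwState L'),
    (runFrom s (ls.map fun l => LcwOp.relabel (ρ l) τ)).n = s.n ∧
    (runFrom s (ls.map fun l => LcwOp.relabel (ρ l) τ)).adj = s.adj ∧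
    (∀ x, (∃ l ∈ ls, s.lab x = some (ρ l)) →
      (runFrom s (ls.map fun l => LcwOp.relabel (ρ l) τ)).lab x = some τ) ∧
    (∀ x, (∀ l ∈ ls, s.lab x ≠ some (ρ l)) →
      (runFrom s (ls.map fun l => LcwOp.relabel (ρ l) τ)).lab x = s.lab x) := by
  intro ls
  induction ls with
  | nil =>
      intro s
      exact ⟨rfl, rfl, fun x hx => by simp at hx, fun x _ => rfl⟩
  | cons l ls ih =>
      intro s
      simp only [List.map_cons, runFrom_cons]
      set s' := s.step (LcwOp.relabel (ρ l) τ) with hs'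
      obtain ⟨ihn, iha, ih3, ih4⟩ := ih s'
      have hs'n : s'.n = s.n := rfl
      have hs'adj : s'.adj = s.adj := rfl
      have hs'lab : ∀ x, s'.lab x = if s.lab x = some (ρ l) then some τ else s.lab x :=
        fun x => rfl
      refine ⟨by rw [ihn, hs'n], by rw [iha, hs'adj], ?_, ?_⟩
      · intro x hx
        obtain ⟨l', hl', hlx⟩ := hx
        by_cases hcase : s.lab x = some (ρ l)
        · have h1 : s'.lab x = some τ := by rw [hs'lab, if_pos hcase]
          refine ih4 x ?_ ▸ h1 ▸ rfl
          intro l'' _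
          rw [h1]
          intro hcon
          exact hτ l'' (Option.some_injective _ hcon)
        · have h1 : s'.lab x = s.lab x := by rw [hs'lab, if_neg hcase]
          rcases List.mem_cons.mp hl' with rfl | hl'
          · exact absurd hlx hcase
          · exact ih3 x ⟨l', hl', by rw [h1, hlx]⟩
      · intro x hx
        have hcase : s.lab x ≠ some (ρ l) := hx l List.mem_cons_self
        have h1 : s'.lab x = s.lab x := by rw [hs'lab, if_neg hcase]
        rw [ih4 x (fun l' hl' => by rw [h1]; exact hx l' (List.mem_cons_of_mem _ hl')), h1]


lemma LcwOp.mapL_comp {L L' L'' : Type} (φ : L' → L'') (ψ : L → L') :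
    (LcwOp.mapL φ) ∘ (LcwOp.mapL ψ) = LcwOp.mapL (φ ∘ ψ) :=
  funext (LcwOp.mapL_mapL φ ψ)

lemma qtIdx_surj (k : ℕ) (p : ℕ) (hp : p < qtN k) : ∃ a : qtV k, qtIdx k a = p := by
  have himg : Finset.image (qtIdx k) Finset.univ = Finset.range (qtN k) := by
    apply Finset.eq_of_subset_of_card_le
    · intro x hx
      obtain ⟨a, -, rfl⟩ := Finset.mem_image.mp hx
      exact Finset.mem_range.mpr (qtIdx_lt k a)
    · rw [Finset.card_range, Finset.card_image_of_injective _ (qtIdx_inj k), Finset.card_univ]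
      exact le_of_eq rfl
  have : p ∈ Finset.image (qtIdx k) Finset.univ := by
    rw [himg]
    exact Finset.mem_range.mpr hp
  obtain ⟨a, -, ha⟩ := Finset.mem_image.mp this
  exact ⟨a, ha⟩

theorem qtE_spec (k : ℕ) : ∀ {L' : Type} [DecidableEq L'] (φ : Fin (k + 2) → L'),
    Function.Injective φ → ∀ (s : LcwState L'),
    (∀ x l, s.lab x = some l → l ∉ Set.range φ) →
    (∀ x, s.n ≤ x → s.lab x = none) →
    (∀ x y, s.adj x y → x < s.n ∧ y < s.n) →
    ∀ t, t = runFrom s ((qtE k).map (LcwOp.mapL φ)) →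
    t.n = s.n + qtN k ∧
    (∀ x y, t.adj x y ↔ (s.adj x y ∨
      ∃ a b, (qtG k).Adj a b ∧ x = s.n + qtIdx k a ∧ y = s.n + qtIdx k b)) ∧
    (∀ x, x < s.n → t.lab x = s.lab x) ∧
    (∀ a : qtV k, ∃ l, t.lab (s.n + qtIdx k a) = some (φ l)) ∧
    (∀ x, s.n + qtN k ≤ x → t.lab x = none) := by
  induction k with
  | zero =>
      intro L' _ φ hφ s hlabout hnone hadjlt t ht
      have hops : (qtE 0).map (LcwOp.mapL φ) =
          [LcwOp.insert (φ 0), LcwOp.insert (φ 1), LcwOp.join (φ 0) (φ 1)] := rfl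
      rw [hops] at ht
      set s2 := (s.step (LcwOp.insert (φ 0))).step (LcwOp.insert (φ 1)) with hs2
      have ht' : t = s2.step (LcwOp.join (φ 0) (φ 1)) := ht
      have hs2n : s2.n = s.n + 2 := rfl
      have hs2lab : ∀ x, s2.lab x =
          if x = s.n + 1 then some (φ 1) else if x = s.n then some (φ 0) else s.lab x :=
        fun _ => rfl
      have h01 : (0 : Fin 2) ≠ 1 := by decide
      have hlab0 : ∀ x, s2.lab x = some (φ 0) ↔ x = s.n := by
        intro x
        rw [hs2lab x]
        by_cases h1 : x = s.n + 1
        · rw [if_pos h1]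
          constructor
          · intro h
            exact absurd (hφ (Option.some_injective _ h)) (Ne.symm h01)
          · intro h
            exact absurd h (by omega)
        · rw [if_neg h1]
          by_cases h2 : x = s.n
          · rw [if_pos h2]
            simp [h2]
          · rw [if_neg h2]
            constructor
            · intro h
              exact absurd ⟨0, rfl⟩ (hlabout x _ h)
            · intro h
              exact absurd h h2
      have hlab1 : ∀ x, s2.lab x = some (φ 1) ↔ x = s.n + 1 := by
        intro x
        rw [hs2lab x]
        by_cases h1 : x = s.n + 1
        · rw [if_pos h1]
          simp [h1]
        · rw [if_neg h1]
          by_cases h2 : x = s.n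
          · rw [if_pos h2]
            constructor
            · intro h
              exact absurd (hφ (Option.some_injective _ h)) h01
            · intro h
              exact absurd h h1
          · rw [if_neg h2]
            constructor
            · intro h
              exact absurd ⟨1, rfl⟩ (hlabout x _ h)
            · intro h
              exact absurd h h1
      have hfin2 : ∀ z : qtV 0, z = ((0 : Fin 2) : qtV 0) ∨ z = ((1 : Fin 2) : qtV 0) := by
        have : ∀ w : Fin 2, w = 0 ∨ w = 1 := by decide
        exact this
      have hadj01 : (qtG 0).Adj ((0 : Fin 2) : qtV 0) ((1 : Fin 2) : qtV 0) := by
        rw [qtG_zero]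
        exact (SimpleGraph.top_adj _ _).mpr h01
      have hidx0 : qtIdx 0 ((0 : Fin 2) : qtV 0) = 0 := rfl
      have hidx1 : qtIdx 0 ((1 : Fin 2) : qtV 0) = 1 := rfl
      refine ⟨?_, ?_, ?_, ?_, ?_⟩
      · rw [ht', qtN_zero]
        exact hs2n
      · intro x y
        rw [ht']
        show (s2.adj x y ∨ (x ≠ y ∧ _)) ↔ _
        constructor
        · rintro (h | ⟨hne, ⟨ha, hb⟩ | ⟨ha, hb⟩⟩)
          · exact Or.inl h
          · refine Or.inr ⟨(0 : Fin 2), (1 : Fin 2), hadj01, ?_, ?_⟩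
            · rw [hidx0, (hlab0 x).mp ha]
              omega
            · rw [hidx1, (hlab1 y).mp hb]
          · refine Or.inr ⟨(1 : Fin 2), (0 : Fin 2), (qtG 0).adj_symm hadj01, ?_, ?_⟩
            · rw [hidx1, (hlab1 x).mp ha]
            · rw [hidx0, (hlab0 y).mp hb]
              omega
        · rintro (h | ⟨a, b, hab, hx, hy⟩)
          · exact Or.inl h
          · rcases hfin2 a with rfl | rfl <;> rcases hfin2 b with rfl | rfl
            · exact absurd hab ((qtG 0).loopless.irrefl _)
            · rw [hidx0] at hx
              rw [hidx1] at hy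
              refine Or.inr ⟨by omega, Or.inl ⟨(hlab0 x).mpr (by omega), (hlab1 y).mpr hy⟩⟩
            · rw [hidx1] at hx
              rw [hidx0] at hy
              refine Or.inr ⟨by omega, Or.inr ⟨(hlab1 x).mpr hx, (hlab0 y).mpr (by omega)⟩⟩
            · exact absurd hab ((qtG 0).loopless.irrefl _)
      · intro x hx
        rw [ht']
        show s2.lab x = s.lab x
        rw [hs2lab x, if_neg (by omega), if_neg (by omega)]
      · intro a
        rw [ht']
        show ∃ l, s2.lab (s.n + qtIdx 0 a) = some (φ l)
        rcases hfin2 a with rfl | rfl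
        · exact ⟨0, (hlab0 _).mpr (by rw [hidx0]; omega)⟩
        · exact ⟨1, (hlab1 _).mpr (by rw [hidx1])⟩
      · intro x hx
        rw [qtN_zero] at hx
        rw [ht']
        show s2.lab x = none
        rw [hs2lab x, if_neg (by omega), if_neg (by omega)]
        exact hnone x (by omega)
  | succ k ih =>
      intro L' _ φ hφ s hlabout hnone hadjlt t ht
      have hφc : Function.Injective (φ ∘ Fin.castSucc) :=
        hφ.comp (Fin.castSucc_injective _)
      have hτρ : ∀ l : Fin (k + 2), φ (Fin.last (k + 2)) ≠ φ l.castSucc := by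
        intro l h
        exact (Fin.castSucc_lt_last l).ne' (hφ h)
      have h0last : φ (0 : Fin (k + 3)) ≠ φ (Fin.last (k + 2)) := by
        intro h
        have := hφ h
        have hv : (0 : ℕ) = k + 2 := congrArg Fin.val this
        omega
      set C : List (LcwOp L') := (qtE k).map (LcwOp.mapL (φ ∘ Fin.castSucc)) with hCdef
      set P : List (LcwOp L') :=
        (List.finRange (k + 2)).map (fun l => LcwOp.relabel (φ l.castSucc) (φ (Fin.last (k + 2)))) with hPdef
      have hops : (qtE (k + 1)).map (LcwOp.mapL φ) =
          (((C ++ P) ++ (C ++ P)) ++ (C ++ P)) ++ (C ++ P) ++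
          [LcwOp.insert (φ 0), LcwOp.join (φ 0) (φ (Fin.last (k + 2)))] := by
        rw [hCdef, hPdef]
        simp only [qtE, List.map_append, List.map_map, LcwOp.mapL_comp, parkOps]
        rfl
      -- one copy-and-park segment
      have seg : ∀ (s' : LcwState L') (off : ℕ),
          s'.n = s.n + off →
          (∀ x, x < s.n → s'.lab x = s.lab x) →
          (∀ p, p < off → s'.lab (s.n + p) = some (φ (Fin.last (k + 2)))) →
          (∀ x, s'.n ≤ x → s'.lab x = none) →
          (∀ x y, s'.adj x y → x < s'.n ∧ y < s'.n) →
          ∀ t', t' = runFrom s' (C ++ P) →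
          t'.n = s.n + (off + qtN k) ∧
          (∀ x, x < s.n → t'.lab x = s.lab x) ∧
          (∀ p, p < off + qtN k → t'.lab (s.n + p) = some (φ (Fin.last (k + 2)))) ∧
          (∀ x, t'.n ≤ x → t'.lab x = none) ∧
          (∀ x y, t'.adj x y ↔ (s'.adj x y ∨ ∃ a b, (qtG k).Adj a b ∧
            x = s.n + (off + qtIdx k a) ∧ y = s.n + (off + qtIdx k b))) ∧
          (∀ x y, t'.adj x y → x < t'.n ∧ y < t'.n) := by
        intro s' off hn hold hpark hnone' hadj' t' ht'
        have hlab' : ∀ x l, s'.lab x = some l → l ∉ Set.range (φ ∘ Fin.castSucc) := by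
          intro x l hl
          rcases lt_or_ge x s.n with hx | hx
          · rw [hold x hx] at hl
            intro ⟨m, hm⟩
            exact (hlabout x l hl) ⟨Fin.castSucc m, hm⟩
          · rcases lt_or_ge x s'.n with hx2 | hx2
            · have hp := hpark (x - s.n) (by omega)
              rw [show s.n + (x - s.n) = x by omega] at hp
              rw [hp] at hl
              have hleq : l = φ (Fin.last (k + 2)) := (Option.some_injective _ hl).symm
              intro ⟨m, hm⟩
              rw [hleq] at hm
              exact hτρ m hm.symm
            · rw [hnone' x hx2] at hl
              exact absurd hl (by simp)
        obtain ⟨h1n, h1adj, h1old, h1new, h1none⟩ :=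
          ih (φ ∘ Fin.castSucc) hφc s' hlab' hnone' hadj' (runFrom s' C) rfl
        obtain ⟨h2n, h2adj, h2l3, h2l4⟩ := relabels_spec (fun l => φ l.castSucc)
          (φ (Fin.last (k + 2))) hτρ (List.finRange (k + 2)) (runFrom s' C)
        rw [← hPdef] at h2n h2adj h2l3 h2l4
        have ht'2 : t' = runFrom (runFrom s' C) P := by rw [ht', runFrom_append]
        have htn : t'.n = s.n + (off + qtN k) := by
          rw [ht'2, h2n, h1n, hn]
          omega
        refine ⟨htn, ?_, ?_, ?_, ?_, ?_⟩
        · intro x hx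
          rw [ht'2]
          have hx' : x < s'.n := by omega
          rw [h2l4 x ?_, h1old x hx', hold x hx]
          intro l _
          rw [h1old x hx', hold x hx]
          cases hsl : s.lab x with
          | none => simp
          | some m =>
              intro hcon
              exact (hlabout x m hsl) ⟨l.castSucc, (Option.some_injective _ hcon).symm⟩
        · intro p hp
          rw [ht'2]
          rcases lt_or_ge p off with hpo | hpo
          · have hx' : s.n + p < s'.n := by omega
            rw [h2l4 _ ?_, h1old _ hx', hpark p hpo]
            intro l _
            rw [h1old _ hx', hpark p hpo]
            intro hcon
            exact hτρ l (Option.some_injective _ hcon)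
          · obtain ⟨a, ha⟩ := qtIdx_surj k (p - off) (by omega)
            obtain ⟨l, hl⟩ := h1new a
            have hpos : s'.n + qtIdx k a = s.n + p := by omega
            rw [hpos] at hl
            exact h2l3 _ ⟨l, List.mem_finRange l, hl⟩
        · intro x hx
          rw [ht'2]
          rw [htn] at hx
          have hx1 : s'.n + qtN k ≤ x := by omega
          rw [h2l4 x ?_, h1none x hx1]
          intro l _
          rw [h1none x hx1]
          simp
        · intro x y
          rw [ht'2, h2adj, h1adj]
          constructor
          · rintro (h | ⟨a, b, hab, hxx, hyy⟩)
            · exact Or.inl h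
            · exact Or.inr ⟨a, b, hab, by omega, by omega⟩
          · rintro (h | ⟨a, b, hab, hxx, hyy⟩)
            · exact Or.inl h
            · exact Or.inr ⟨a, b, hab, by omega, by omega⟩
        · intro x y h
          rw [ht'2, h2adj] at h
          rw [h1adj] at h
          rcases h with h | ⟨a, b, hab, hxx, hyy⟩
          · have := hadj' x y h
            omega
          · have ha := qtIdx_lt k a
            have hb := qtIdx_lt k b
            omega
      -- run the four segments
      set s1 : LcwState L' := runFrom s (C ++ P) with hs1def
      set s2 : LcwState L' := runFrom s1 (C ++ P) with hs2def
      set s3 : LcwState L' := runFrom s2 (C ++ P) with hs3def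
      set s4 : LcwState L' := runFrom s3 (C ++ P) with hs4def
      obtain ⟨s1n, s1old, s1park, s1none, s1adj, s1lt⟩ :=
        seg s 0 (by omega) (fun x _ => rfl) (fun p hp => absurd hp (by omega))
          hnone hadjlt s1 hs1def
      obtain ⟨s2n, s2old, s2park, s2none, s2adj, s2lt⟩ :=
        seg s1 (qtN k) (by omega) s1old (fun p hp => s1park p (by omega))
          s1none s1lt s2 hs2def
      obtain ⟨s3n, s3old, s3park, s3none, s3adj, s3lt⟩ :=
        seg s2 (qtN k + qtN k) (by omega) s2old (fun p hp => s2park p (by omega))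
          s2none s2lt s3 hs3def
      obtain ⟨s4n, s4old, s4park, s4none, s4adj, s4lt⟩ :=
        seg s3 (qtN k + qtN k + qtN k) (by omega) s3old (fun p hp => s3park p (by omega))
          s3none s3lt s4 hs4def
      have hs4n : s4.n = s.n + 4 * qtN k := by omega
      -- the final insert and join
      have e1 : runFrom (runFrom s C) P = s1 := by rw [hs1def, runFrom_append]
      have e2 : runFrom (runFrom s1 C) P = s2 := by rw [hs2def, runFrom_append]
      have e3 : runFrom (runFrom s2 C) P = s3 := by rw [hs3def, runFrom_append]
      have e4 : runFrom (runFrom s3 C) P = s4 := by rw [hs4def, runFrom_append]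
      have ht2 : t = (s4.step (LcwOp.insert (φ 0))).step
          (LcwOp.join (φ 0) (φ (Fin.last (k + 2)))) := by
        rw [ht, hops]
        simp only [runFrom_append]
        rw [e1, e2, e3, e4]
        rfl
      set t5 : LcwState L' := s4.step (LcwOp.insert (φ 0)) with ht5def
      have ht5lab : ∀ x, t5.lab x = if x = s4.n then some (φ 0) else s4.lab x := fun _ => rfl
      have ht5adj : t5.adj = s4.adj := rfl
      have ht5n : t5.n = s4.n + 1 := rfl
      -- label characterizations after the insert
      have hl0 : ∀ x, t5.lab x = some (φ 0) ↔ x = s4.n := by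
        intro x
        rw [ht5lab x]
        by_cases h1 : x = s4.n
        · rw [if_pos h1]
          simp [h1]
        · rw [if_neg h1]
          constructor
          · intro h
            rcases lt_or_ge x s.n with hx | hx
            · rw [s4old x hx] at h
              exact absurd ⟨0, rfl⟩ (hlabout x _ h)
            · rcases lt_or_ge x s4.n with hx2 | hx2
              · have hp := s4park (x - s.n) (by omega)
                rw [show s.n + (x - s.n) = x by omega] at hp
                rw [hp] at h
                exact absurd (Option.some_injective _ h).symm h0last
              · rw [s4none x hx2] at h
                exact absurd h (by simp)
          · intro h
            exact absurd h h1
      have hllast : ∀ y, t5.lab y = some (φ (Fin.last (k + 2))) ↔ (s.n ≤ y ∧ y < s4.n) := by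
        intro y
        rw [ht5lab y]
        by_cases h1 : y = s4.n
        · rw [if_pos h1]
          constructor
          · intro h
            exact absurd (Option.some_injective _ h) h0last
          · intro h
            omega
        · rw [if_neg h1]
          constructor
          · intro h
            rcases lt_or_ge y s.n with hy | hy
            · rw [s4old y hy] at h
              exact absurd ⟨Fin.last (k + 2), rfl⟩ (hlabout y _ h)
            · rcases lt_or_ge y s4.n with hy2 | hy2
              · exact ⟨hy, hy2⟩
              · rw [s4none y hy2] at h
                exact absurd h (by simp)
          · intro h
            have hp := s4park (y - s.n) (by omega)
            rw [show s.n + (y - s.n) = y by omega] at hp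
            exact hp
      -- cumulative adjacency of the four copies
      have hs4adjiff : ∀ x y, s4.adj x y ↔ (s.adj x y ∨ ∃ c : ℕ, c < 4 ∧
          ∃ a b, (qtG k).Adj a b ∧ x = s.n + (c * qtN k + qtIdx k a) ∧
            y = s.n + (c * qtN k + qtIdx k b)) := by
        intro x y
        rw [s4adj x y, s3adj x y, s2adj x y, s1adj x y]
        constructor
        · rintro ((((h | ⟨a, b, hab, hx, hy⟩) | ⟨a, b, hab, hx, hy⟩) |
              ⟨a, b, hab, hx, hy⟩) | ⟨a, b, hab, hx, hy⟩)
          · exact Or.inl h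
          · exact Or.inr ⟨0, by omega, a, b, hab, by omega, by omega⟩
          · exact Or.inr ⟨1, by omega, a, b, hab, by omega, by omega⟩
          · exact Or.inr ⟨2, by omega, a, b, hab, by omega, by omega⟩
          · exact Or.inr ⟨3, by omega, a, b, hab, by omega, by omega⟩
        · rintro (h | ⟨c, hc, a, b, hab, hx, hy⟩)
          · exact Or.inl (Or.inl (Or.inl (Or.inl h)))
          · interval_cases c
            · exact Or.inl (Or.inl (Or.inl (Or.inr ⟨a, b, hab, by omega, by omega⟩)))
            · exact Or.inl (Or.inl (Or.inr ⟨a, b, hab, by omega, by omega⟩))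
            · exact Or.inl (Or.inr ⟨a, b, hab, by omega, by omega⟩)
            · exact Or.inr ⟨a, b, hab, by omega, by omega⟩
      refine ⟨?_, ?_, ?_, ?_, ?_⟩
      · rw [ht2, qtN_succ]
        show t5.n = _
        omega
      · intro x y
        rw [ht2]
        show (t5.adj x y ∨ (x ≠ y ∧ _)) ↔ _
        constructor
        · rintro (h | ⟨hne, ⟨ha, hb⟩ | ⟨ha, hb⟩⟩)
          · rw [ht5adj] at h
            rcases (hs4adjiff x y).mp h with h | ⟨c, hc, a, b, hab, hx, hy⟩
            · exact Or.inl h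
            · refine Or.inr ⟨qtEmb k ⟨c, hc⟩ a, qtEmb k ⟨c, hc⟩ b,
                (qtG_adj_emb k _ _ a b).mpr ⟨rfl, hab⟩, ?_, ?_⟩
              · rw [qtIdx_emb]
                exact hx
              · rw [qtIdx_emb]
                exact hy
          · -- apex to a copy vertex
            have hx := (hl0 x).mp ha
            have hy := (hllast y).mp hb
            obtain ⟨b, hbidx⟩ := qtIdx_surj (k + 1) (y - s.n)
              (by rw [qtN_succ]; omega)
            have hbne : b ≠ qtApex k := by
              intro hb'
              rw [hb', qtIdx_apex] at hbidx
              omega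
            refine Or.inr ⟨qtApex k, b, qtG_adj_apex k b hbne, ?_, ?_⟩
            · rw [qtIdx_apex]
              omega
            · omega
          · have hx := (hllast x).mp ha
            have hy := (hl0 y).mp hb
            obtain ⟨b, hbidx⟩ := qtIdx_surj (k + 1) (x - s.n)
              (by rw [qtN_succ]; omega)
            have hbne : b ≠ qtApex k := by
              intro hb'
              rw [hb', qtIdx_apex] at hbidx
              omega
            refine Or.inr ⟨b, qtApex k,
              (qtG (k + 1)).adj_symm (qtG_adj_apex k b hbne), ?_, ?_⟩
            · omega
            · rw [qtIdx_apex]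
              omega
        · rintro (h | ⟨a, b, hab, hx, hy⟩)
          · exact Or.inl ((show t5.adj x y ↔ s4.adj x y by rw [ht5adj]).mpr
              ((hs4adjiff x y).mpr (Or.inl h)))
          · rcases qtV_cases k a with rfl | ⟨c, a', rfl⟩ <;>
              rcases qtV_cases k b with rfl | ⟨c', b', rfl⟩
            · exact absurd hab ((qtG (k + 1)).loopless.irrefl _)
            · rw [qtIdx_apex] at hx
              rw [qtIdx_emb] at hy
              have hlt1 := qtIdx_lt k b'
              have hlt2 : (c' : ℕ) * qtN k ≤ 3 * qtN k :=
                Nat.mul_le_mul_right _ (Fin.is_le c')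
              refine Or.inr ⟨by omega, Or.inl ⟨(hl0 x).mpr (by omega),
                (hllast y).mpr (by omega)⟩⟩
            · rw [qtIdx_apex] at hy
              rw [qtIdx_emb] at hx
              have hlt1 := qtIdx_lt k a'
              have hlt2 : (c : ℕ) * qtN k ≤ 3 * qtN k :=
                Nat.mul_le_mul_right _ (Fin.is_le c)
              refine Or.inr ⟨by omega, Or.inr ⟨(hllast x).mpr (by omega),
                (hl0 y).mpr (by omega)⟩⟩
            · obtain ⟨hcc, hab'⟩ := (qtG_adj_emb k c c' a' b').mp hab
              subst hcc
              rw [qtIdx_emb] at hx hy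
              refine Or.inl ((show t5.adj x y ↔ s4.adj x y by rw [ht5adj]).mpr
                ((hs4adjiff x y).mpr (Or.inr ⟨(c : ℕ), c.isLt, a', b', hab', hx, hy⟩)))
      · intro x hx
        rw [ht2]
        show t5.lab x = s.lab x
        rw [ht5lab x, if_neg (by omega)]
        exact s4old x hx
      · intro a
        rw [ht2]
        show ∃ l, t5.lab (s.n + qtIdx (k + 1) a) = some (φ l)
        rcases qtV_cases k a with rfl | ⟨c, a', rfl⟩
        · refine ⟨0, (hl0 _).mpr ?_⟩
          rw [qtIdx_apex]
          omega
        · refine ⟨Fin.last (k + 2), (hllast _).mpr ?_⟩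
          rw [qtIdx_emb]
          have hlt1 := qtIdx_lt k a'
          have hlt2 : (c : ℕ) * qtN k ≤ 3 * qtN k :=
            Nat.mul_le_mul_right _ (Fin.is_le c)
          omega
      · intro x hx
        rw [qtN_succ] at hx
        rw [ht2]
        show t5.lab x = none
        rw [ht5lab x, if_neg (by omega)]
        exact s4none x (by omega)


lemma wf_append {l₁ l₂ : List (LcwOp L)} (h₁ : WfExpr l₁) (h₂ : WfExpr l₂) :
    WfExpr (l₁ ++ l₂) := by
  intro op hop i j heq
  rcases List.mem_append.mp hop with h | h
  · exact h₁ op h i j heq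
  · exact h₂ op h i j heq

lemma wf_mapL {L' : Type} (φ : L → L') (hφ : Function.Injective φ) {l : List (LcwOp L)}
    (h : WfExpr l) : WfExpr (l.map (LcwOp.mapL φ)) := by
  intro op hop i j heq
  obtain ⟨op', hop', rfl⟩ := List.mem_map.mp hop
  cases op' with
  | insert a => exact absurd heq (by simp [LcwOp.mapL])
  | relabel a b => exact absurd heq (by simp [LcwOp.mapL])
  | join a b =>
      have hab : a ≠ b := h _ hop' a b rfl
      have heq' : LcwOp.join (φ a) (φ b) = LcwOp.join i j := heq
      injection heq' with h1 h2
      rw [← h1, ← h2]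
      exact fun hc => hab (hφ hc)

lemma wf_parkOps (k : ℕ) : WfExpr (parkOps k) := by
  intro op hop i j heq
  obtain ⟨l, -, rfl⟩ := List.mem_map.mp hop
  exact absurd heq (by simp)

lemma wf_qtE : ∀ k : ℕ, WfExpr (qtE k) := by
  intro k
  induction k with
  | zero =>
      intro op hop i j heq
      have : op = LcwOp.insert 0 ∨ op = LcwOp.insert 1 ∨ op = LcwOp.join 0 1 := by
        simpa [qtE] using hop
      rcases this with rfl | rfl | rfl
      · exact absurd heq (by simp)
      · exact absurd heq (by simp)
      · injection heq with h1 h2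
        rw [← h1, ← h2]
        decide
  | succ k ih =>
      have hC : WfExpr ((qtE k).map (LcwOp.mapL Fin.castSucc)) :=
        wf_mapL _ (Fin.castSucc_injective _) ih
      intro op hop i j heq
      have hop' : op ∈ (qtE k).map (LcwOp.mapL Fin.castSucc) ∨ op ∈ parkOps k ∨
          op = LcwOp.insert (0 : Fin (k + 3)) ∨ op = LcwOp.join 0 (Fin.last (k + 2)) := by
        simp only [qtE, List.mem_append, List.mem_cons, List.not_mem_nil, or_false] at hop
        tauto
      rcases hop' with h | h | rfl | rfl
      · exact hC op h i j heq
      · exact wf_parkOps k op h i j heq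
      · exact absurd heq (by simp)
      · injection heq with h1 h2
        rw [← h1, ← h2]
        intro hc
        have := congrArg Fin.val hc
        simp [Fin.last] at this

lemma LcwOp.mapL_id' : LcwOp.mapL (id : L → L) = id := funext LcwOp.mapL_id

lemma qtG_upper (k : ℕ) : ∃ e : List (LcwOp (Fin (k + 2))), Builds e (qtG k) := by
  have hid : (qtE k).map (LcwOp.mapL (id : Fin (k + 2) → Fin (k + 2))) = qtE k := by
    rw [LcwOp.mapL_id', List.map_id]
  obtain ⟨hn, hadj, -, -, -⟩ := qtE_spec k (id : Fin (k + 2) → Fin (k + 2))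
    (fun a b h => h) (LcwState.init (Fin (k + 2)))
    (fun x l h => absurd h (by simp [LcwState.init]))
    (fun x _ => rfl) (fun x y h => h.elim)
    (runLcw (qtE k)) (by rw [hid, runLcw_eq_runFrom])
  have hinitn : (LcwState.init (Fin (k + 2))).n = 0 := rfl
  refine ⟨qtE k, qtIdx k, wf_qtE k, qtIdx_inj k, ?_, ?_, ?_⟩
  · rw [hn, hinitn]
    show 0 + qtN k = Fintype.card (qtV k)
    rw [qtN]
    omega
  · intro v
    rw [hn, hinitn]
    have := qtIdx_lt k v
    omega
  · intro u v
    rw [hadj]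
    constructor
    · intro h
      refine Or.inr ⟨u, v, h, ?_, ?_⟩ <;> · rw [hinitn]; omega
    · rintro (h | ⟨a, b, hab, hx, hy⟩)
      · exact absurd h (fun hc => hc)
      · rw [hinitn] at hx hy
        have ha : qtIdx k u = qtIdx k a := by omega
        have hb : qtIdx k v = qtIdx k b := by omega
        rw [qtIdx_inj k ha, qtIdx_inj k hb]
        exact hab

end Statement8Aux

/-- the graphs `G₁ = K₂`,
`G_{k+1} = K₁ ∗ ((G_k ∪ G_k) ∪ (G_k ∪ G_k))` are quasi-threshold graphs with
`lcw (G_k) = k + 1` for all `k ≥ 1`.  Here `qtG k = G_{k+1}` (0-indexed), so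
the claim reads `lcw (qtG k) = (k + 1) + 1`. -/
theorem statement_8 (k : ℕ) :
    IsQuasiThreshold (qtG k) ∧ lcw (qtG k) = (k + 1) + 1 := by
  refine ⟨qtG_isQuasiThreshold k, ?_⟩
  have hmem : (k + 2) ∈ {q : ℕ | ∃ e : List (LcwOp (Fin q)), Builds e (qtG k)} :=
    qtG_upper k
  show sInf {q : ℕ | ∃ e : List (LcwOp (Fin q)), Builds e (qtG k)} = k + 1 + 1
  apply le_antisymm
  · exact Nat.sInf_le hmem
  · exact le_csInf ⟨k + 2, hmem⟩ (fun q hq => by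
      obtain ⟨e, he⟩ := hq
      exact qtG_lower k q e he)
end
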